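/- arXiv:1601.05637 — 10 statements merged into one kernel-verified Lean document; each statement's English description precedes it below -/
import Mathlib

section
/- Let R = [r_{n,k}] be the Riordan array determined by a nonnegative A-sequence (a_n) and Z-sequence (z_n), and let r ≥ 1. If the coefficient matrix J(R) is totally positive of order r (TP_r), then R is TP_r. -/
/-- An infinite real matrix `M` is totally positive of order `r` (TP_r) if every minor of
order `k ≤ r` (determinant of a `k × k` submatrix with rows and columns chosen in
increasing order) is nonnegative. -/
def IsTPOrder (r : ℕ) (M : ℕ → ℕ → ℝ) : Prop :=
  ∀ k : ℕ, k ≤ r → ∀ rows cols : Fin k → ℕ, StrictMono rows → StrictMono cols →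
    0 ≤ (Matrix.of fun i j => M (rows i) (cols j)).det

/-- The coefficient matrix `J(R)` of the Riordan array with `A`-sequence `a` and
`Z`-sequence `z`: column 0 is `z`, and the `(i,j)` entry for `j ≥ 1` is `a (i+1-j)`
(zero when `j > i+1`). -/
def coeffMatrix (a z : ℕ → ℝ) : ℕ → ℕ → ℝ := fun i j =>
  if j = 0 then z i else if j ≤ i + 1 then a (i + 1 - j) else 0

open Finset Matrix

lemma det_mul_expand {k N : ℕ} (A : Matrix (Fin k) (Fin N) ℝ) (B : Matrix (Fin N) (Fin k) ℝ) :
    (A * B).det = ∑ g : Fin k → Fin N, (∏ i, A i (g i)) * (B.submatrix g id).det := by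
  have h1 : (A * B).det
      = Matrix.detRowAlternating (R := ℝ) (fun i => ∑ t : Fin N, A i t • B t) := by
    congr 1
    ext i j
    simp [Matrix.mul_apply, Finset.sum_apply]
  rw [h1]
  rw [show (Matrix.detRowAlternating (R := ℝ) (fun i => ∑ t : Fin N, A i t • B t) : ℝ)
      = (Matrix.detRowAlternating (R := ℝ)).toMultilinearMap
        (fun i => ∑ t : Fin N, (fun i t => A i t • B t) i t) from rfl]
  rw [MultilinearMap.map_sum]
  apply Finset.sum_congr rfl
  intro g _
  rw [show (fun i => A i (g i) • B (g i)) = fun i => (fun i => A i (g i)) i • (fun i => B (g i)) i from rfl]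
  rw [MultilinearMap.map_smul_univ, smul_eq_mul]
  rfl

lemma strictMono_comp_perm_eq {k N : ℕ} {f₁ f₂ : Fin k → Fin N} {σ₁ σ₂ : Equiv.Perm (Fin k)}
    (h₁ : StrictMono f₁) (h₂ : StrictMono f₂) (h : f₁ ∘ σ₁ = f₂ ∘ σ₂) :
    f₁ = f₂ ∧ σ₁ = σ₂ := by
  have hr : Set.range f₁ = Set.range f₂ := by
    have e1 : Set.range (f₁ ∘ σ₁) = Set.range f₁ := by
      rw [Set.range_comp, σ₁.surjective.range_eq, Set.image_univ]
    have e2 : Set.range (f₂ ∘ σ₂) = Set.range f₂ := by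
      rw [Set.range_comp, σ₂.surjective.range_eq, Set.image_univ]
    rw [← e1, ← e2, h]
  haveI : WellFoundedLT (Fin k) := inferInstance
  have hf : f₁ = f₂ := (StrictMono.range_inj (f := f₁) (g := f₂) h₁ h₂).1 hr
  subst hf
  refine ⟨rfl, Equiv.ext fun i => h₁.injective ?_⟩
  exact congrFun h i

lemma injective_factor {k N : ℕ} {g : Fin k → Fin N} (hg : Function.Injective g) :
    ∃ (f : Fin k → Fin N) (σ : Equiv.Perm (Fin k)), StrictMono f ∧ g = f ∘ σ := by
  have hcard : (Finset.image g Finset.univ).card = k := by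
    rw [Finset.card_image_of_injective _ hg, Finset.card_univ, Fintype.card_fin]
  set s := Finset.image g Finset.univ with hs
  have hmem : ∀ i, g i ∈ s := fun i => Finset.mem_image_of_mem g (Finset.mem_univ i)
  set τ : Fin k → Fin k := fun i => (s.orderIsoOfFin hcard).symm ⟨g i, hmem i⟩ with hτdef
  have hτ : Function.Injective τ := by
    intro i j hij
    apply hg
    have := congrArg (fun x => ((s.orderIsoOfFin hcard) x : Fin N)) hij
    simpa [hτdef] using this
  refine ⟨s.orderEmbOfFin hcard, Equiv.ofBijective τ (Finite.injective_iff_bijective.1 hτ),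
    (s.orderEmbOfFin hcard).strictMono, ?_⟩
  funext i
  simp [Equiv.ofBijective, hτdef, ← Finset.coe_orderIsoOfFin_apply]

theorem cauchy_binet {k N : ℕ} (A : Matrix (Fin k) (Fin N) ℝ) (B : Matrix (Fin N) (Fin k) ℝ) :
    (A * B).det = ∑ f ∈ Finset.univ.filter (fun f : Fin k → Fin N => StrictMono f),
      (A.submatrix id f).det * (B.submatrix f id).det := by
  classical
  rw [det_mul_expand]
  have h2 : ∑ g : Fin k → Fin N, (∏ i, A i (g i)) * (B.submatrix g id).det
      = ∑ g ∈ Finset.univ.filter (fun g : Fin k → Fin N => Function.Injective g),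
          (∏ i, A i (g i)) * (B.submatrix g id).det := by
    refine (Finset.sum_subset (Finset.filter_subset _ _) ?_).symm
    intro g _ hg
    simp only [Finset.mem_filter, Finset.mem_univ, true_and] at hg
    rw [Function.not_injective_iff] at hg
    obtain ⟨i, j, hgij, hij⟩ := hg
    have hz : (B.submatrix g id).det = 0 := by
      refine Matrix.det_zero_of_row_eq hij ?_
      funext t
      simp [Matrix.submatrix, hgij]
    rw [hz, mul_zero]
  rw [h2]
  have h3 := Finset.sum_bij
    (s := (Finset.univ.filter fun f : Fin k → Fin N => StrictMono f) ×ˢ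
      (Finset.univ : Finset (Equiv.Perm (Fin k))))
    (t := Finset.univ.filter (fun g : Fin k → Fin N => Function.Injective g))
    (f := fun p => (∏ i, A i ((p.1 ∘ p.2) i)) * (B.submatrix (p.1 ∘ p.2) id).det)
    (g := fun g => (∏ i, A i (g i)) * (B.submatrix g id).det)
    (i := fun p _ => p.1 ∘ p.2)
    (by
      intro p hp
      simp only [Finset.mem_product, Finset.mem_filter, Finset.mem_univ, true_and] at hp ⊢
      exact hp.1.injective.comp p.2.injective)
    (by
      intro p₁ hp₁ p₂ hp₂ h
      simp only [Finset.mem_product, Finset.mem_filter, Finset.mem_univ, true_and, and_true] at hp₁ hp₂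
      obtain ⟨hf, hσ⟩ := strictMono_comp_perm_eq hp₁ hp₂ h
      exact Prod.ext hf hσ)
    (by
      intro g hg
      simp only [Finset.mem_filter, Finset.mem_univ, true_and] at hg
      obtain ⟨f, σ, hf, hfac⟩ := injective_factor hg
      exact ⟨(f, σ), by simp [Finset.mem_product, hf], hfac.symm⟩)
    (fun p hp => rfl)
  rw [← h3, Finset.sum_product]
  apply Finset.sum_congr rfl
  intro f hf
  have hdetB : ∀ σ : Equiv.Perm (Fin k),
      (B.submatrix (f ∘ σ) id).det = (Equiv.Perm.sign σ : ℝ) * (B.submatrix f id).det := by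
    intro σ
    have : B.submatrix (f ∘ σ) id = (B.submatrix f id).submatrix σ id := rfl
    rw [this, Matrix.det_permute]
  have hdetA : (A.submatrix id f).det
      = ∑ σ : Equiv.Perm (Fin k), (Equiv.Perm.sign σ : ℝ) * ∏ i, A i (f (σ i)) := by
    rw [← Matrix.det_transpose, Matrix.det_apply']
    apply Finset.sum_congr rfl
    intro σ _
    simp [Matrix.transpose, Matrix.submatrix]
  rw [hdetA, Finset.sum_mul]
  apply Finset.sum_congr rfl
  intro σ _
  rw [hdetB σ]
  simp only [Function.comp_apply]
  ring

theorem riordan_TP_of_coeff_TPOrder (a z : ℕ → ℝ) (ha : ∀ n, 0 ≤ a n) (hz : ∀ n, 0 ≤ z n)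
    (r : ℕ) (hr : 1 ≤ r) (R : ℕ → ℕ → ℝ)
    (hR00 : R 0 0 = 1)
    (htri : ∀ n k, n < k → R n k = 0)
    (hZ : ∀ n, R (n + 1) 0 = ∑ j ∈ Finset.range (n + 1), z j * R n j)
    (hA : ∀ n k, R (n + 1) (k + 1) = ∑ j ∈ Finset.range (n + 1), a j * R n (k + j))
    (hJ : IsTPOrder r (coeffMatrix a z)) :
    IsTPOrder r R := by
  classical
  have hcm : ∀ c' t : ℕ, coeffMatrix a z t (c' + 1) = if c' ≤ t then a (t - c') else 0 := by
    intro c' t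
    simp only [coeffMatrix, Nat.succ_ne_zero, if_false]
    by_cases h : c' ≤ t
    · rw [if_pos (by omega), if_pos h]
      congr 1
      omega
    · rw [if_neg (by omega), if_neg h]
  have hrec : ∀ (n c N : ℕ), n < N →
      R (n + 1) c = ∑ t ∈ Finset.range N, R n t * coeffMatrix a z t c := by
    intro n c N hn
    have hext : ∑ t ∈ Finset.range N, R n t * coeffMatrix a z t c
        = ∑ t ∈ Finset.range (n + 1), R n t * coeffMatrix a z t c := by
      refine (Finset.sum_subset (Finset.range_subset_range.2 hn) ?_).symm
      intro t ht hnt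
      simp only [Finset.mem_range] at ht hnt
      rw [htri n t (by omega), zero_mul]
    rw [hext]
    cases c with
    | zero =>
      rw [hZ n]
      refine Finset.sum_congr rfl fun j _ => ?_
      simp [coeffMatrix, mul_comm]
    | succ c' =>
      rw [hA n c']
      by_cases hc : c' ≤ n
      · have hL : ∑ j ∈ Finset.range (n + 1), a j * R n (c' + j)
            = ∑ j ∈ Finset.range (n + 1 - c'), a j * R n (c' + j) := by
          refine (Finset.sum_subset (Finset.range_subset_range.2 (by omega)) ?_).symm
          intro j hj hnj
          simp only [Finset.mem_range] at hj hnj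
          rw [htri n (c' + j) (by omega), mul_zero]
        have hRt : ∑ t ∈ Finset.range (n + 1), R n t * coeffMatrix a z t (c' + 1)
            = ∑ t ∈ Finset.Ico c' (n + 1), a (t - c') * R n t := by
          rw [Finset.range_eq_Ico,
            ← Finset.sum_Ico_consecutive _ (Nat.zero_le c') (by omega : c' ≤ n + 1)]
          have h0 : ∑ t ∈ Finset.Ico 0 c', R n t * coeffMatrix a z t (c' + 1) = 0 := by
            apply Finset.sum_eq_zero
            intro t ht
            simp only [Finset.mem_Ico] at ht
            rw [hcm, if_neg (by omega), mul_zero]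
          rw [h0, zero_add]
          refine Finset.sum_congr rfl fun t ht => ?_
          simp only [Finset.mem_Ico] at ht
          rw [hcm, if_pos ht.1]
          ring
        rw [hL, hRt, Finset.sum_Ico_eq_sum_range]
        refine Finset.sum_congr rfl fun j _ => ?_
        rw [Nat.add_sub_cancel_left]
      · have e1 : ∑ j ∈ Finset.range (n + 1), a j * R n (c' + j) = 0 := by
          apply Finset.sum_eq_zero
          intro j _
          rw [htri n (c' + j) (by omega), mul_zero]
        have e2 : ∑ t ∈ Finset.range (n + 1), R n t * coeffMatrix a z t (c' + 1) = 0 := by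
          apply Finset.sum_eq_zero
          intro t ht
          simp only [Finset.mem_range] at ht
          rw [hcm, if_neg (by omega), mul_zero]
        rw [e1, e2]
  suffices key : ∀ m : ℕ, ∀ k, k ≤ r → ∀ rows cols : Fin k → ℕ, StrictMono rows →
      StrictMono cols → (∀ i, rows i + k < m) →
      0 ≤ (Matrix.of fun i j => R (rows i) (cols j)).det by
    intro k hk rows cols hrows hcols
    refine key (k + Finset.univ.sup rows + 1) k hk rows cols hrows hcols fun i => ?_
    have := Finset.le_sup (f := rows) (Finset.mem_univ i)
    omega
  intro m
  induction m using Nat.strong_induction_on with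
  | _ m IH =>
    intro k hk rows cols hrows hcols hbound
    cases k with
    | zero => simp [Matrix.det_fin_zero]
    | succ k' =>
      have hm1 : 1 ≤ m := by have := hbound 0; omega
      have hk' : k' ≤ r := by omega
      by_cases h0 : rows 0 = 0
      · by_cases hc0 : cols 0 = 0
        · rw [Matrix.det_succ_row_zero]
          rw [Finset.sum_eq_single 0 ?_ ?_]
          · have hentry : (Matrix.of fun i j => R (rows i) (cols j)) 0 0 = 1 := by
              show R (rows 0) (cols 0) = 1
              rw [h0, hc0, hR00]
            rw [hentry]
            simp only [Fin.val_zero, pow_zero, one_mul, mul_one]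
            rw [Fin.succAbove_zero]
            have heq : ((Matrix.of fun i j => R (rows i) (cols j)).submatrix Fin.succ Fin.succ)
                = Matrix.of (fun i j => R ((rows ∘ Fin.succ) i) ((cols ∘ Fin.succ) j)) := rfl
            rw [heq]
            refine IH (m - 1) (by omega) k' hk' _ _ (hrows.comp Fin.strictMono_succ)
              (hcols.comp Fin.strictMono_succ) fun i => ?_
            have := hbound i.succ
            have h1 : rows 0 < rows i.succ := hrows (Fin.succ_pos i)
            simp only [Function.comp_apply]
            omega
          · intro j _ hj
            have hz0 : (Matrix.of fun i j => R (rows i) (cols j)) 0 j = 0 := by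
              show R (rows 0) (cols j) = 0
              rw [h0]
              apply htri
              have : cols 0 < cols j := hcols (by
                rcases Fin.pos_iff_ne_zero.2 hj with h
                exact h)
              omega
            rw [hz0]
            ring
          · intro h
            exact absurd (Finset.mem_univ 0) h
        · have hdet : (Matrix.of fun i j => R (rows i) (cols j)).det = 0 := by
            apply Matrix.det_eq_zero_of_row_eq_zero 0
            intro j
            show R (rows 0) (cols j) = 0
            rw [h0]
            apply htri
            have h1 : 0 < cols 0 := Nat.pos_of_ne_zero hc0
            have h2 : cols 0 ≤ cols j := hcols.monotone (Fin.zero_le j)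
            omega
          rw [hdet]
      · have hpos : ∀ i, 1 ≤ rows i := by
          intro i
          have h2 : rows 0 ≤ rows i := hrows.monotone (Fin.zero_le i)
          omega
        set A : Matrix (Fin (k' + 1)) (Fin m) ℝ :=
          Matrix.of (fun i t => R (rows i - 1) (t : ℕ)) with hA'
        set B : Matrix (Fin m) (Fin (k' + 1)) ℝ :=
          Matrix.of (fun t j => coeffMatrix a z (t : ℕ) (cols j)) with hB'
        have hM : (Matrix.of fun i j => R (rows i) (cols j)) = A * B := by
          ext i j
          rw [Matrix.mul_apply]
          show R (rows i) (cols j) = _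
          have h1 : rows i = (rows i - 1) + 1 := by have := hpos i; omega
          rw [h1, hrec (rows i - 1) (cols j) m (by have := hbound i; omega),
            ← Fin.sum_univ_eq_sum_range]
          rfl
        rw [hM, cauchy_binet]
        apply Finset.sum_nonneg
        intro f hfm
        have hfmono : StrictMono f := by
          simpa using (Finset.mem_filter.1 hfm).2
        apply mul_nonneg
        · have h1 : A.submatrix id f
              = Matrix.of (fun i j => R ((fun i => rows i - 1) i) ((fun j => (f j : ℕ)) j)) := rfl
          rw [h1]
          refine IH (m - 1) (by omega) (k' + 1) hk _ _ ?_ ?_ fun i => ?_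
          · intro x y hxy
            have := hrows hxy
            have := hpos x
            show rows x - 1 < rows y - 1
            omega
          · intro x y hxy
            exact hfmono hxy
          · have := hbound i
            have := hpos i
            show rows i - 1 + (k' + 1) < m - 1
            omega
        · have h2 : B.submatrix f id
              = Matrix.of (fun i j => coeffMatrix a z ((fun i => (f i : ℕ)) i) (cols j)) := rfl
          rw [h2]
          exact hJ (k' + 1) hk _ cols (fun x y hxy => hfmono hxy) hcols
end

section
/- Let R = [r_{n,k}] be the Riordan array determined by a nonnegative A-sequence (a_n) and Z-sequence (z_n). If the coefficient matrix J(R) is totally positive (TP), then R is TP. -/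
/-- An infinite real matrix `M` is totally positive (TP) if every minor
(determinant of a square submatrix with rows and columns chosen in
increasing order) is nonnegative. -/
def IsTP (M : ℕ → ℕ → ℝ) : Prop :=
  ∀ k : ℕ, ∀ rows cols : Fin k → ℕ, StrictMono rows → StrictMono cols →
    0 ≤ (Matrix.of fun i j => M (rows i) (cols j)).det

open Finset Matrix in

lemma det_expand_sum {k N : ℕ} (A : Fin k → ℕ → ℝ) (B : ℕ → Fin k → ℝ) :
    (Matrix.of fun i j => ∑ s ∈ Finset.range N, A i s * B s j).det
      = ∑ r ∈ Fintype.piFinset (fun _ : Fin k => Finset.range N),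
          (∏ i, A i (r i)) * (Matrix.of fun i j => B (r i) j).det := by
  have hM : (Matrix.of fun i j => ∑ s ∈ Finset.range N, A i s * B s j)
      = fun i => ∑ s ∈ Finset.range N, A i s • B s := by
    funext i j
    simp [Finset.sum_apply, smul_eq_mul]
  have h1 : (Matrix.of fun i j => ∑ s ∈ Finset.range N, A i s * B s j).det
      = Matrix.detRowAlternating.toMultilinearMap
          (fun i => ∑ s ∈ Finset.range N, A i s • B s) := by
    rw [show (Matrix.of fun i j => ∑ s ∈ Finset.range N, A i s * B s j).det
        = Matrix.detRowAlternating.toMultilinearMap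
            (Matrix.of fun i j => ∑ s ∈ Finset.range N, A i s * B s j) from rfl, hM]
  rw [h1, Matrix.detRowAlternating.toMultilinearMap.map_sum_finset
      (fun i s => A i s • B s) (fun _ => Finset.range N)]
  refine Finset.sum_congr rfl fun r _ => ?_
  rw [Matrix.detRowAlternating.toMultilinearMap.map_smul_univ (fun i => A i (r i))
      (fun i => B (r i))]
  rw [smul_eq_mul]
  rfl

lemma cauchyBinet {k N : ℕ} (A : Fin k → ℕ → ℝ) (B : ℕ → Fin k → ℝ) :
    (Matrix.of fun i j => ∑ s ∈ Finset.range N, A i s * B s j).det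
      = ∑ f ∈ (Fintype.piFinset (fun _ : Fin k => Finset.range N)).filter
            (fun f => StrictMono f),
          (Matrix.of fun i j => A i (f j)).det * (Matrix.of fun i j => B (f i) j).det := by
  rw [det_expand_sum]
  -- restrict to injective tuples
  rw [← Finset.sum_filter_add_sum_filter_not
        (Fintype.piFinset (fun _ : Fin k => Finset.range N)) (fun r => Function.Injective r)]
  have hnon : ∑ r ∈ (Fintype.piFinset (fun _ : Fin k => Finset.range N)).filter
        (fun r => ¬ Function.Injective r),
        (∏ i, A i (r i)) * (Matrix.of fun i j => B (r i) j).det = 0 := by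
    refine Finset.sum_eq_zero fun r hr => ?_
    rw [Finset.mem_filter] at hr
    obtain ⟨i, j, hij, hne⟩ : ∃ i j, r i = r j ∧ i ≠ j := by
      simpa [Function.Injective] using hr.2
    rw [Matrix.det_zero_of_row_eq hne (by funext l; simp [hij]), mul_zero]
  rw [hnon, add_zero]
  -- expand the RHS determinant of A-part as a sum over permutations
  have hdetA : ∀ f : Fin k → ℕ, (Matrix.of fun i j => A i (f j)).det
      = ∑ σ : Equiv.Perm (Fin k),
          (Equiv.Perm.sign σ : ℝ) * ∏ i, A i (f (σ i)) := by
    intro f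
    rw [← Matrix.det_transpose, Matrix.det_apply']
    rfl
  have hperm : ∀ (f : Fin k → ℕ) (σ : Equiv.Perm (Fin k)),
      (Matrix.of fun i j => B (f (σ i)) j).det
        = (Equiv.Perm.sign σ : ℝ) * (Matrix.of fun i j => B (f i) j).det := by
    intro f σ
    exact Matrix.det_permute σ (Matrix.of fun i j => B (f i) j)
  have hRHS : ∑ f ∈ (Fintype.piFinset (fun _ : Fin k => Finset.range N)).filter
        (fun f => StrictMono f),
        (Matrix.of fun i j => A i (f j)).det * (Matrix.of fun i j => B (f i) j).det
      = ∑ f ∈ (Fintype.piFinset (fun _ : Fin k => Finset.range N)).filter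
        (fun f => StrictMono f), ∑ σ : Equiv.Perm (Fin k),
          (∏ i, A i (f (σ i))) * (Matrix.of fun i j => B (f (σ i)) j).det := by
    refine Finset.sum_congr rfl fun f hf => ?_
    rw [hdetA, Finset.sum_mul]
    refine Finset.sum_congr rfl fun σ _ => ?_
    rw [hperm f σ]
    ring
  rw [hRHS]
  rw [Finset.sum_sigma']
  refine (Finset.sum_bij (fun p _ => fun i => p.1 (p.2 i)) ?_ ?_ ?_ ?_).symm
  · -- maps into the filter-injective set
    rintro ⟨f, σ⟩ hp
    simp only [Finset.mem_sigma, Finset.mem_filter, Finset.mem_univ, and_true] at hp ⊢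
    obtain ⟨hmem, hmono⟩ := hp
    constructor
    · rw [Fintype.mem_piFinset] at hmem ⊢
      exact fun i => hmem (σ i)
    · exact hmono.injective.comp σ.injective
  · -- injectivity
    rintro ⟨f, σ⟩ hp ⟨f', σ'⟩ hp' heq
    simp only [Finset.mem_sigma, Finset.mem_filter, Finset.mem_univ, and_true] at hp hp'
    have hrange : Set.range f = Set.range f' :=
      calc Set.range f = Set.range (f ∘ ⇑σ) := (σ.surjective.range_comp f).symm
        _ = Set.range (f' ∘ ⇑σ') := by rw [show f ∘ ⇑σ = f' ∘ ⇑σ' from heq]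
        _ = Set.range f' := σ'.surjective.range_comp f'
    have hff' : f = f' := (StrictMono.range_inj hp.2 hp'.2).1 hrange
    subst hff'
    have hσσ' : σ = σ' := Equiv.ext fun i => hp.2.injective (congrFun heq i)
    subst hσσ'
    rfl
  · -- surjectivity
    intro r hr
    rw [Finset.mem_filter] at hr
    obtain ⟨hmem, hinj⟩ := hr
    set σ₀ := Tuple.sort r with hσ₀
    have hmono : StrictMono (r ∘ σ₀) :=
      (Tuple.monotone_sort r).strictMono_of_injective (hinj.comp σ₀.injective)
    refine ⟨⟨r ∘ σ₀, σ₀⁻¹⟩, ?_, ?_⟩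
    · simp only [Finset.mem_sigma, Finset.mem_filter, Finset.mem_univ, and_true]
      refine ⟨?_, hmono⟩
      rw [Fintype.mem_piFinset] at hmem ⊢
      exact fun i => hmem (σ₀ i)
    · funext i
      simp [Function.comp, Equiv.Perm.inv_def]
  · -- values agree
    rintro ⟨f, σ⟩ hp
    rfl

open Finset Matrix in
lemma row_rec (a z : ℕ → ℝ) (R : ℕ → ℕ → ℝ)
    (htri : ∀ n k, n < k → R n k = 0)
    (hZ : ∀ n, R (n + 1) 0 = ∑ j ∈ Finset.range (n + 1), z j * R n j)
    (hA : ∀ n k, R (n + 1) (k + 1) = ∑ j ∈ Finset.range (n + 1), a j * R n (k + j))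
    (n c N : ℕ) (hN : n < N) :
    R (n + 1) c = ∑ s ∈ Finset.range N, R n s * coeffMatrix a z s c := by
  rcases c with _ | c
  · rw [hZ n]
    rw [← Finset.sum_subset (Finset.range_subset_range.2 hN)
        (fun s _ hs => by
          rw [htri n s (by simpa using hs), zero_mul])]
    exact Finset.sum_congr rfl fun s _ => by simp [coeffMatrix, mul_comm]
  · rw [hA n c]
    have hcoeff : ∀ s, c ≤ s → coeffMatrix a z s (c + 1) = a (s - c) := by
      intro s hs
      simp only [coeffMatrix, Nat.succ_ne_zero, if_false, if_pos (by omega : c + 1 ≤ s + 1)]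
      congr 1
      omega
    have hcoeff0 : ∀ s, s < c → coeffMatrix a z s (c + 1) = 0 := by
      intro s hs
      simp only [coeffMatrix, Nat.succ_ne_zero, if_false, if_neg (by omega : ¬ c + 1 ≤ s + 1)]
    -- RHS over Ico c N
    have h1 : ∑ s ∈ Finset.range N, R n s * coeffMatrix a z s (c + 1)
        = ∑ s ∈ Finset.Ico c N, R n s * coeffMatrix a z s (c + 1) := by
      refine (Finset.sum_subset (fun s hs => ?_) (fun s hs hns => ?_)).symm
      · rw [Finset.mem_Ico] at hs
        exact Finset.mem_range.2 hs.2
      · rw [Finset.mem_range] at hs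
        rw [Finset.mem_Ico, not_and] at hns
        rw [hcoeff0 s (by omega), mul_zero]
    have h2 : ∑ s ∈ Finset.Ico c N, R n s * coeffMatrix a z s (c + 1)
        = ∑ j ∈ Finset.range (N - c), a j * R n (c + j) := by
      rw [Finset.sum_Ico_eq_sum_range]
      refine Finset.sum_congr rfl fun j _ => ?_
      rw [hcoeff (c + j) (by omega), Nat.add_sub_cancel_left, mul_comm]
    rw [h1, h2]
    set M := max (N - c) (n + 1) with hM
    have h3 : ∑ j ∈ Finset.range (n + 1), a j * R n (c + j)
        = ∑ j ∈ Finset.range M, a j * R n (c + j) := by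
      refine Finset.sum_subset (Finset.range_subset_range.2 (le_max_right _ _))
        (fun j _ hj => ?_)
      rw [Finset.mem_range, not_lt] at hj
      rw [htri n (c + j) (by omega), mul_zero]
    have h4 : ∑ j ∈ Finset.range (N - c), a j * R n (c + j)
        = ∑ j ∈ Finset.range M, a j * R n (c + j) := by
      refine Finset.sum_subset (Finset.range_subset_range.2 (le_max_left _ _))
        (fun j _ hj => ?_)
      rw [Finset.mem_range, not_lt] at hj
      rw [htri n (c + j) (by omega), mul_zero]
    rw [h3, ← h4]

open Finset Matrix in
lemma main_ind (a z : ℕ → ℝ) (R : ℕ → ℕ → ℝ)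
    (hR00 : R 0 0 = 1)
    (htri : ∀ n k, n < k → R n k = 0)
    (hZ : ∀ n, R (n + 1) 0 = ∑ j ∈ Finset.range (n + 1), z j * R n j)
    (hA : ∀ n k, R (n + 1) (k + 1) = ∑ j ∈ Finset.range (n + 1), a j * R n (k + j))
    (hJ : IsTP (coeffMatrix a z)) :
    ∀ m : ℕ, ∀ k : ℕ, ∀ rows cols : Fin k → ℕ, k + ∑ i, rows i ≤ m →
      StrictMono rows → StrictMono cols →
      0 ≤ (Matrix.of fun i j => R (rows i) (cols j)).det := by
  intro m
  induction m using Nat.strong_induction_on with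
  | _ m IH =>
  intro k rows cols hm hrows hcols
  rcases k with _ | k
  · simp [Matrix.det_isEmpty]
  rcases Nat.eq_zero_or_pos (rows 0) with h0 | h0
  · rcases Nat.eq_zero_or_pos (cols 0) with hc0 | hc0
    · -- expand along the first row
      rw [Matrix.det_succ_row_zero]
      rw [Finset.sum_eq_single 0 (fun j _ hj => ?_) (by simp)]
      · -- the j = 0 term
        have hM00 : (Matrix.of fun i j => R (rows i) (cols j)) 0 0 = 1 := by
          simp [Matrix.of_apply, h0, hc0, hR00]
        rw [hM00]
        simp only [Fin.val_zero, pow_zero, one_mul, Fin.succAbove_zero]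
        have hdet : ((Matrix.of fun i j => R (rows i) (cols j)).submatrix
              Fin.succ Fin.succ).det
            = (Matrix.of fun (i : Fin k) (j : Fin k) =>
                R ((rows ∘ Fin.succ) i) ((cols ∘ Fin.succ) j)).det := rfl
        rw [hdet]
        have hsum : ∑ i : Fin (k + 1), rows i
            = rows 0 + ∑ i : Fin k, rows (Fin.succ i) := Fin.sum_univ_succ rows
        refine IH (k + ∑ i : Fin k, rows (Fin.succ i)) (by omega) k
          (rows ∘ Fin.succ) (cols ∘ Fin.succ) le_rfl
          (hrows.comp Fin.strictMono_succ) (hcols.comp Fin.strictMono_succ)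
      · -- other terms vanish
        have hj' : (0 : Fin (k + 1)) < j := by
          rcases Fin.eq_zero_or_eq_succ j with rfl | ⟨j', rfl⟩
          · exact absurd rfl hj
          · exact Fin.succ_pos j'
        have : (Matrix.of fun i j => R (rows i) (cols j)) 0 j = 0 := by
          have : 0 < cols j := by
            have := hcols hj'
            omega
          simp only [Matrix.of_apply]
          rw [h0]
          exact htri 0 (cols j) this
        rw [this]
        ring
    · -- first row of the minor is zero
      refine le_of_eq (Matrix.det_eq_zero_of_row_eq_zero 0 fun j => ?_).symm
      have : 0 < cols j := lt_of_lt_of_le hc0 (hcols.monotone (Fin.zero_le j))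
      simp only [Matrix.of_apply]
      rw [h0]
      exact htri 0 (cols j) this
  · -- all rows positive: use the recurrence and Cauchy–Binet
    set N := rows (Fin.last k) with hN
    have hpos : ∀ i, 0 < rows i := fun i => lt_of_lt_of_le h0 (hrows.monotone (Fin.zero_le i))
    have hlt : ∀ i : Fin (k + 1), rows i - 1 < N := by
      intro i
      have h1 := hpos i
      have h2 : rows i ≤ N := hrows.monotone (Fin.le_last i)
      omega
    have hMeq : (Matrix.of fun i j => R (rows i) (cols j))
        = Matrix.of fun i j => ∑ s ∈ Finset.range N,
            R (rows i - 1) s * coeffMatrix a z s (cols j) := by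
      funext i j
      simp only [Matrix.of_apply]
      have := row_rec a z R htri hZ hA (rows i - 1) (cols j) N (hlt i)
      have heq : rows i - 1 + 1 = rows i := Nat.succ_pred_eq_of_pos (hpos i)
      rw [← heq]
      exact this
    rw [hMeq, cauchyBinet (fun i s => R (rows i - 1) s)
        (fun s j => coeffMatrix a z s (cols j))]
    refine Finset.sum_nonneg fun f hf => ?_
    rw [Finset.mem_filter] at hf
    have hfmono : StrictMono f := hf.2
    refine mul_nonneg ?_ (hJ (k + 1) f cols hfmono hcols)
    -- apply the induction hypothesis to the rows shifted down by one
    have hrows' : StrictMono fun i => rows i - 1 := by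
      intro i j hij
      have h1 := hpos i
      have h2 := hrows hij
      show rows i - 1 < rows j - 1
      omega
    have hmeas : (k + 1) + ∑ i : Fin (k + 1), (rows i - 1) < m := by
      have hstrict : ∑ i : Fin (k + 1), (rows i - 1) < ∑ i : Fin (k + 1), rows i := by
        refine Finset.sum_lt_sum (fun i _ => Nat.sub_le _ _) ⟨0, Finset.mem_univ _, ?_⟩
        omega
      omega
    exact IH ((k + 1) + ∑ i : Fin (k + 1), (rows i - 1)) hmeas (k + 1)
      (fun i => rows i - 1) f le_rfl hrows' hfmono

theorem riordan_TP_of_coeff_TP (a z : ℕ → ℝ) (ha : ∀ n, 0 ≤ a n) (hz : ∀ n, 0 ≤ z n)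
    (R : ℕ → ℕ → ℝ)
    (hR00 : R 0 0 = 1)
    (htri : ∀ n k, n < k → R n k = 0)
    (hZ : ∀ n, R (n + 1) 0 = ∑ j ∈ Finset.range (n + 1), z j * R n j)
    (hA : ∀ n k, R (n + 1) (k + 1) = ∑ j ∈ Finset.range (n + 1), a j * R n (k + j))
    (hJ : IsTP (coeffMatrix a z)) :
    IsTP R := by
  intro k rows cols hr hc
  exact main_ind a z R hR00 htri hZ hA hJ (k + ∑ i, rows i) k rows cols le_rfl hr hc
end

section
/- Let R = [r_{n,k}] be the Riordan array determined by an A-sequence (a_n) and Z-sequence (z_n). If R is totally positive of order 2 (TP_2) and z_n ≥ 0 for all n, then the 0th column (r_{n,0})_{n≥0} of R is log-convex. -/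
theorem riordan_col0_logConvex_of_TP2 (a z : ℕ → ℝ) (hz : ∀ n, 0 ≤ z n)
    (R : ℕ → ℕ → ℝ)
    (hR00 : R 0 0 = 1)
    (htri : ∀ n k, n < k → R n k = 0)
    (hZ : ∀ n, R (n + 1) 0 = ∑ j ∈ Finset.range (n + 1), z j * R n j)
    (hA : ∀ n k, R (n + 1) (k + 1) = ∑ j ∈ Finset.range (n + 1), a j * R n (k + j))
    (hR : IsTPOrder 2 R) :
    ∀ i j : ℕ, i < j → R (i + 1) 0 * R j 0 ≤ R i 0 * R (j + 1) 0 := by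
  -- entries are nonnegative
  have hpos : ∀ n k, 0 ≤ R n k := by
    intro n k
    have h := hR 1 (by norm_num) ![n] ![k]
      (fun x y hxy => (hxy.ne (Subsingleton.elim x y)).elim)
      (fun x y hxy => (hxy.ne (Subsingleton.elim x y)).elim)
    simpa [Matrix.det_fin_one] using h
  -- 2x2 minors
  have hminor : ∀ i j k : ℕ, i < j → R i k * R j 0 ≤ R i 0 * R j k := by
    intro i j k hij
    rcases k with _ | m
    · exact le_of_eq (by ring)
    · have hrows : StrictMono (![i, j] : Fin 2 → ℕ) := by
        intro x y hxy
        fin_cases x <;> fin_cases y <;> simp_all <;> omega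
      have hcols : StrictMono (![0, m + 1] : Fin 2 → ℕ) := by
        intro x y hxy
        fin_cases x <;> fin_cases y <;> simp_all <;> omega
      have h := hR 2 le_rfl ![i, j] ![0, m + 1] hrows hcols
      rw [Matrix.det_fin_two] at h
      simp only [Matrix.of_apply, Matrix.cons_val_zero, Matrix.cons_val_one,
        Matrix.head_cons] at h
      linarith
  intro i j hij
  have hsum_i : R (i + 1) 0 = ∑ k ∈ Finset.range (j + 1), z k * R i k := by
    rw [hZ]
    refine Finset.sum_subset ?_ ?_
    · intro x hx
      simp only [Finset.mem_range] at hx ⊢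
      omega
    · intro k hk hk'
      simp only [Finset.mem_range] at hk hk'
      rw [htri i k (by omega), mul_zero]
  rw [hsum_i, hZ, Finset.sum_mul, Finset.mul_sum]
  refine Finset.sum_le_sum fun k _ => ?_
  have := hminor i j k hij
  have := hz k
  nlinarith
end

section
/- Let a,b,s,t be nonnegative reals with a·s ≥ b and s² ≥ t. Then the sequence of Catalan-like numbers (r_{n,0})_{n≥0} of the recursive matrix R(a,b;s,t) is log-convex. -/
theorem catalanLike_logConvex (a b s t : ℝ) (ha : 0 ≤ a) (hb : 0 ≤ b) (hs : 0 ≤ s)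
    (ht : 0 ≤ t) (h1 : a * s ≥ b) (h2 : s ^ 2 ≥ t)
    (R : ℕ → ℕ → ℝ)
    (hR00 : R 0 0 = 1)
    (htri : ∀ n k, n < k → R n k = 0)
    (hcol0 : ∀ n, R (n + 1) 0 = a * R n 0 + b * R n 1)
    (hrec : ∀ n k, R (n + 1) (k + 1) = R n k + s * R n (k + 1) + t * R n (k + 2)) :
    ∀ i j : ℕ, i < j → R (i + 1) 0 * R j 0 ≤ R i 0 * R (j + 1) 0 := by
  have hpos : ∀ n k, 0 ≤ R n k := by
    intro n
    induction n with
    | zero =>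
      intro k
      rcases k with _ | k
      · rw [hR00]; norm_num
      · rw [htri 0 (k+1) (by omega)]
    | succ n ih =>
      intro k
      rcases k with _ | k
      · rw [hcol0 n]
        exact add_nonneg (mul_nonneg ha (ih 0)) (mul_nonneg hb (ih 1))
      · rw [hrec n k]
        exact add_nonneg (add_nonneg (ih k) (mul_nonneg hs (ih (k+1))))
          (mul_nonneg ht (ih (k+2)))
  have hab : 0 ≤ a * s - b := by linarith
  have hs2 : 0 ≤ s * s - t := by nlinarith [h2]
  have main : ∀ n : ℕ,
      (∀ i j : ℕ, i ≤ j + 1 →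
        0 ≤ R n (i+1) * R n (j+1) - R n i * R n (j+2) -
            t * (R n (i+2) * R n (j+2) - R n (i+1) * R n (j+3))) ∧
      (∀ j : ℕ, 0 ≤ R n 0 * R (n+1) (j+1) - R (n+1) 0 * R n (j+1)) := by
    intro n
    induction n with
    | zero =>
      constructor
      · intro i j _
        rw [htri 0 (i+1) (by omega), htri 0 (j+2) (by omega), htri 0 (i+2) (by omega),
          htri 0 (j+3) (by omega)]
        simp
      · intro j
        rw [htri 0 (j+1) (by omega), hR00]
        have := hpos 1 (j+1)
        linarith
    | succ n ih =>
      obtain ⟨hV, hW⟩ := ih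
      constructor
      · intro i j hij
        rcases i with _ | p
        · rcases j with _ | m
          · -- case A : i = 0, j = 0
            show 0 ≤ R (n+1) 1 * R (n+1) 1 - R (n+1) 0 * R (n+1) 2 -
                t * (R (n+1) 2 * R (n+1) 2 - R (n+1) 1 * R (n+1) 3)
            have e0 : R (n+1) 0 = a * R n 0 + b * R n 1 := hcol0 n
            have e1 : R (n+1) 1 = R n 0 + s * R n 1 + t * R n 2 := hrec n 0
            have e2 : R (n+1) 2 = R n 1 + s * R n 2 + t * R n 3 := hrec n 1
            have e3 : R (n+1) 3 = R n 2 + s * R n 3 + t * R n 4 := hrec n 2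
            have A1 : 0 ≤ R n 1 * R n 1 - R n 0 * R n 2 -
                t * (R n 2 * R n 2 - R n 1 * R n 3) := hV 0 0 (by omega)
            have A2 : 0 ≤ R n 1 * R n 2 - R n 0 * R n 3 -
                t * (R n 2 * R n 3 - R n 1 * R n 4) := hV 0 1 (by omega)
            have A3 : 0 ≤ R n 2 * R n 2 - R n 1 * R n 3 -
                t * (R n 3 * R n 3 - R n 2 * R n 4) := hV 1 1 (by omega)
            have B1 : 0 ≤ R n 0 * R (n+1) 1 - R (n+1) 0 * R n 1 := hW 0
            have B2 : 0 ≤ R n 0 * R (n+1) 2 - R (n+1) 0 * R n 2 := hW 1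
            have B3 : 0 ≤ R n 0 * R (n+1) 3 - R (n+1) 0 * R n 3 := hW 2
            simp only [e0, e1, e2, e3] at B1 B2 B3 ⊢
            linarith [mul_nonneg hs2 A1, mul_nonneg (mul_nonneg hs ht) A2,
              mul_nonneg (mul_nonneg ht ht) A3, B1, mul_nonneg hs B2, mul_nonneg ht B3]
          · -- case B : i = 0, j = m+1
            show 0 ≤ R (n+1) 1 * R (n+1) (m+2) - R (n+1) 0 * R (n+1) (m+3) -
                t * (R (n+1) 2 * R (n+1) (m+3) - R (n+1) 1 * R (n+1) (m+4))
            have e0 : R (n+1) 0 = a * R n 0 + b * R n 1 := hcol0 n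
            have e1 : R (n+1) 1 = R n 0 + s * R n 1 + t * R n 2 := hrec n 0
            have e2 : R (n+1) 2 = R n 1 + s * R n 2 + t * R n 3 := hrec n 1
            have g1 : R (n+1) (m+2) = R n (m+1) + s * R n (m+2) + t * R n (m+3) := hrec n (m+1)
            have g2 : R (n+1) (m+3) = R n (m+2) + s * R n (m+3) + t * R n (m+4) := hrec n (m+2)
            have g3 : R (n+1) (m+4) = R n (m+3) + s * R n (m+4) + t * R n (m+5) := hrec n (m+3)
            have A1 : 0 ≤ R n 1 * R n (m+1) - R n 0 * R n (m+2) -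
                t * (R n 2 * R n (m+2) - R n 1 * R n (m+3)) := hV 0 m (by omega)
            have A2 : 0 ≤ R n 1 * R n (m+2) - R n 0 * R n (m+3) -
                t * (R n 2 * R n (m+3) - R n 1 * R n (m+4)) := hV 0 (m+1) (by omega)
            have A3 : 0 ≤ R n 1 * R n (m+3) - R n 0 * R n (m+4) -
                t * (R n 2 * R n (m+4) - R n 1 * R n (m+5)) := hV 0 (m+2) (by omega)
            have A4 : 0 ≤ R n 2 * R n (m+1) - R n 1 * R n (m+2) -
                t * (R n 3 * R n (m+2) - R n 2 * R n (m+3)) := hV 1 m (by omega)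
            have A5 : 0 ≤ R n 2 * R n (m+2) - R n 1 * R n (m+3) -
                t * (R n 3 * R n (m+3) - R n 2 * R n (m+4)) := hV 1 (m+1) (by omega)
            have A6 : 0 ≤ R n 2 * R n (m+3) - R n 1 * R n (m+4) -
                t * (R n 3 * R n (m+4) - R n 2 * R n (m+5)) := hV 1 (m+2) (by omega)
            have B1 : 0 ≤ R n 0 * R (n+1) (m+2) - R (n+1) 0 * R n (m+2) := hW (m+1)
            have B2 : 0 ≤ R n 0 * R (n+1) (m+3) - R (n+1) 0 * R n (m+3) := hW (m+2)
            have B3 : 0 ≤ R n 0 * R (n+1) (m+4) - R (n+1) 0 * R n (m+4) := hW (m+3)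
            simp only [e0, e1, e2, g1, g2, g3] at B1 B2 B3 ⊢
            linarith [mul_nonneg hs A1, mul_nonneg (mul_nonneg hs hs) A2,
              mul_nonneg (mul_nonneg hs ht) A3, mul_nonneg ht A4,
              mul_nonneg (mul_nonneg hs ht) A5, mul_nonneg (mul_nonneg ht ht) A6,
              B1, mul_nonneg hs B2, mul_nonneg ht B3]
        · obtain ⟨m, rfl⟩ : ∃ m, j = p + m := ⟨j - p, by omega⟩
          rcases m with _ | m
          · -- case Z : i = p+1, j = p
            show 0 ≤ R (n+1) (p+2) * R (n+1) (p+1) - R (n+1) (p+1) * R (n+1) (p+2) -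
                t * (R (n+1) (p+3) * R (n+1) (p+2) - R (n+1) (p+2) * R (n+1) (p+3))
            have hz : R (n+1) (p+2) * R (n+1) (p+1) - R (n+1) (p+1) * R (n+1) (p+2) -
                t * (R (n+1) (p+3) * R (n+1) (p+2) - R (n+1) (p+2) * R (n+1) (p+3)) = 0 := by
              ring
            linarith
          rcases m with _ | m
          · -- case C : i = p+1, j = p+1
            show 0 ≤ R (n+1) (p+2) * R (n+1) (p+2) - R (n+1) (p+1) * R (n+1) (p+3) -
                t * (R (n+1) (p+3) * R (n+1) (p+3) - R (n+1) (p+2) * R (n+1) (p+4))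
            have e1 : R (n+1) (p+1) = R n p + s * R n (p+1) + t * R n (p+2) := hrec n p
            have e2 : R (n+1) (p+2) = R n (p+1) + s * R n (p+2) + t * R n (p+3) := hrec n (p+1)
            have e3 : R (n+1) (p+3) = R n (p+2) + s * R n (p+3) + t * R n (p+4) := hrec n (p+2)
            have e4 : R (n+1) (p+4) = R n (p+3) + s * R n (p+4) + t * R n (p+5) := hrec n (p+3)
            have A1 : 0 ≤ R n (p+1) * R n (p+1) - R n p * R n (p+2) -
                t * (R n (p+2) * R n (p+2) - R n (p+1) * R n (p+3)) := hV p p (by omega)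
            have A2 : 0 ≤ R n (p+1) * R n (p+2) - R n p * R n (p+3) -
                t * (R n (p+2) * R n (p+3) - R n (p+1) * R n (p+4)) := hV p (p+1) (by omega)
            have A3 : 0 ≤ R n (p+1) * R n (p+3) - R n p * R n (p+4) -
                t * (R n (p+2) * R n (p+4) - R n (p+1) * R n (p+5)) := hV p (p+2) (by omega)
            have A4 : 0 ≤ R n (p+2) * R n (p+1) - R n (p+1) * R n (p+2) -
                t * (R n (p+3) * R n (p+2) - R n (p+2) * R n (p+3)) := hV (p+1) p (by omega)
            have A5 : 0 ≤ R n (p+2) * R n (p+2) - R n (p+1) * R n (p+3) -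
                t * (R n (p+3) * R n (p+3) - R n (p+2) * R n (p+4)) := hV (p+1) (p+1) (by omega)
            have A6 : 0 ≤ R n (p+2) * R n (p+3) - R n (p+1) * R n (p+4) -
                t * (R n (p+3) * R n (p+4) - R n (p+2) * R n (p+5)) := hV (p+1) (p+2) (by omega)
            have A7 : 0 ≤ R n (p+3) * R n (p+2) - R n (p+2) * R n (p+3) -
                t * (R n (p+4) * R n (p+3) - R n (p+3) * R n (p+4)) := hV (p+2) (p+1) (by omega)
            have A8 : 0 ≤ R n (p+3) * R n (p+3) - R n (p+2) * R n (p+4) -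
                t * (R n (p+4) * R n (p+4) - R n (p+3) * R n (p+5)) := hV (p+2) (p+2) (by omega)
            simp only [e1, e2, e3, e4]
            linarith [A1, mul_nonneg hs A2, mul_nonneg ht A3, mul_nonneg hs A4,
              mul_nonneg hs2 A5, mul_nonneg (mul_nonneg hs ht) A6,
              mul_nonneg (mul_nonneg hs ht) A7, mul_nonneg (mul_nonneg ht ht) A8]
          · -- case D : i = p+1, j = p+m+2
            show 0 ≤ R (n+1) (p+2) * R (n+1) (p+m+3) - R (n+1) (p+1) * R (n+1) (p+m+4) -
                t * (R (n+1) (p+3) * R (n+1) (p+m+4) - R (n+1) (p+2) * R (n+1) (p+m+5))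
            have e1 : R (n+1) (p+1) = R n p + s * R n (p+1) + t * R n (p+2) := hrec n p
            have e2 : R (n+1) (p+2) = R n (p+1) + s * R n (p+2) + t * R n (p+3) := hrec n (p+1)
            have e3 : R (n+1) (p+3) = R n (p+2) + s * R n (p+3) + t * R n (p+4) := hrec n (p+2)
            have g1 : R (n+1) (p+m+3) = R n (p+m+2) + s * R n (p+m+3) + t * R n (p+m+4) :=
              hrec n (p+m+2)
            have g2 : R (n+1) (p+m+4) = R n (p+m+3) + s * R n (p+m+4) + t * R n (p+m+5) :=
              hrec n (p+m+3)
            have g3 : R (n+1) (p+m+5) = R n (p+m+4) + s * R n (p+m+5) + t * R n (p+m+6) :=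
              hrec n (p+m+4)
            have A1 : 0 ≤ R n (p+1) * R n (p+m+2) - R n p * R n (p+m+3) -
                t * (R n (p+2) * R n (p+m+3) - R n (p+1) * R n (p+m+4)) :=
              hV p (p+m+1) (by omega)
            have A2 : 0 ≤ R n (p+1) * R n (p+m+3) - R n p * R n (p+m+4) -
                t * (R n (p+2) * R n (p+m+4) - R n (p+1) * R n (p+m+5)) :=
              hV p (p+m+2) (by omega)
            have A3 : 0 ≤ R n (p+1) * R n (p+m+4) - R n p * R n (p+m+5) -
                t * (R n (p+2) * R n (p+m+5) - R n (p+1) * R n (p+m+6)) :=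
              hV p (p+m+3) (by omega)
            have A4 : 0 ≤ R n (p+2) * R n (p+m+2) - R n (p+1) * R n (p+m+3) -
                t * (R n (p+3) * R n (p+m+3) - R n (p+2) * R n (p+m+4)) :=
              hV (p+1) (p+m+1) (by omega)
            have A5 : 0 ≤ R n (p+2) * R n (p+m+3) - R n (p+1) * R n (p+m+4) -
                t * (R n (p+3) * R n (p+m+4) - R n (p+2) * R n (p+m+5)) :=
              hV (p+1) (p+m+2) (by omega)
            have A6 : 0 ≤ R n (p+2) * R n (p+m+4) - R n (p+1) * R n (p+m+5) -
                t * (R n (p+3) * R n (p+m+5) - R n (p+2) * R n (p+m+6)) :=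
              hV (p+1) (p+m+3) (by omega)
            have A7 : 0 ≤ R n (p+3) * R n (p+m+2) - R n (p+2) * R n (p+m+3) -
                t * (R n (p+4) * R n (p+m+3) - R n (p+3) * R n (p+m+4)) :=
              hV (p+2) (p+m+1) (by omega)
            have A8 : 0 ≤ R n (p+3) * R n (p+m+3) - R n (p+2) * R n (p+m+4) -
                t * (R n (p+4) * R n (p+m+4) - R n (p+3) * R n (p+m+5)) :=
              hV (p+2) (p+m+2) (by omega)
            have A9 : 0 ≤ R n (p+3) * R n (p+m+4) - R n (p+2) * R n (p+m+5) -
                t * (R n (p+4) * R n (p+m+5) - R n (p+3) * R n (p+m+6)) :=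
              hV (p+2) (p+m+3) (by omega)
            simp only [e1, e2, e3, g1, g2, g3]
            linarith [A1, mul_nonneg hs A2, mul_nonneg ht A3, mul_nonneg hs A4,
              mul_nonneg (mul_nonneg hs hs) A5, mul_nonneg (mul_nonneg hs ht) A6,
              mul_nonneg ht A7, mul_nonneg (mul_nonneg hs ht) A8,
              mul_nonneg (mul_nonneg ht ht) A9]
      · intro j
        rcases j with _ | j
        · -- case E : j = 0
          show 0 ≤ R (n+1) 0 * R (n+2) 1 - R (n+2) 0 * R (n+1) 1
          have f0 : R (n+2) 0 = a * R (n+1) 0 + b * R (n+1) 1 := hcol0 (n+1)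
          have f1 : R (n+2) 1 = R (n+1) 0 + s * R (n+1) 1 + t * R (n+1) 2 := hrec (n+1) 0
          have e0 : R (n+1) 0 = a * R n 0 + b * R n 1 := hcol0 n
          have e1 : R (n+1) 1 = R n 0 + s * R n 1 + t * R n 2 := hrec n 0
          have e2 : R (n+1) 2 = R n 1 + s * R n 2 + t * R n 3 := hrec n 1
          have A1 : 0 ≤ R n 1 * R n 1 - R n 0 * R n 2 -
              t * (R n 2 * R n 2 - R n 1 * R n 3) := hV 0 0 (by omega)
          have B1 : 0 ≤ R n 0 * R (n+1) 1 - R (n+1) 0 * R n 1 := hW 0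
          have B2 : 0 ≤ R n 0 * R (n+1) 2 - R (n+1) 0 * R n 2 := hW 1
          simp only [f0, f1, e0, e1, e2] at B1 B2 ⊢
          linarith [mul_nonneg hab B1, mul_nonneg (mul_nonneg ha ht) B2,
            mul_nonneg (mul_nonneg hb ht) A1]
        rcases j with _ | m
        · -- case F : j = 1
          show 0 ≤ R (n+1) 0 * R (n+2) 2 - R (n+2) 0 * R (n+1) 2
          have f0 : R (n+2) 0 = a * R (n+1) 0 + b * R (n+1) 1 := hcol0 (n+1)
          have f2 : R (n+2) 2 = R (n+1) 1 + s * R (n+1) 2 + t * R (n+1) 3 := hrec (n+1) 1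
          have e0 : R (n+1) 0 = a * R n 0 + b * R n 1 := hcol0 n
          have e1 : R (n+1) 1 = R n 0 + s * R n 1 + t * R n 2 := hrec n 0
          have e2 : R (n+1) 2 = R n 1 + s * R n 2 + t * R n 3 := hrec n 1
          have e3 : R (n+1) 3 = R n 2 + s * R n 3 + t * R n 4 := hrec n 2
          have A1 : 0 ≤ R n 1 * R n 1 - R n 0 * R n 2 -
              t * (R n 2 * R n 2 - R n 1 * R n 3) := hV 0 0 (by omega)
          have A2 : 0 ≤ R n 1 * R n 2 - R n 0 * R n 3 -
              t * (R n 2 * R n 3 - R n 1 * R n 4) := hV 0 1 (by omega)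
          have B1 : 0 ≤ R n 0 * R (n+1) 1 - R (n+1) 0 * R n 1 := hW 0
          have B2 : 0 ≤ R n 0 * R (n+1) 2 - R (n+1) 0 * R n 2 := hW 1
          have B3 : 0 ≤ R n 0 * R (n+1) 3 - R (n+1) 0 * R n 3 := hW 2
          simp only [f0, f2, e0, e1, e2, e3] at B1 B2 B3 ⊢
          linarith [mul_nonneg ha B1, mul_nonneg (mul_nonneg ha hs) B2,
            mul_nonneg (mul_nonneg ha ht) B3, mul_nonneg (mul_nonneg hb hs) A1,
            mul_nonneg (mul_nonneg hb ht) A2]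
        · -- case G : j = m+2
          show 0 ≤ R (n+1) 0 * R (n+2) (m+3) - R (n+2) 0 * R (n+1) (m+3)
          have f0 : R (n+2) 0 = a * R (n+1) 0 + b * R (n+1) 1 := hcol0 (n+1)
          have fg : R (n+2) (m+3) = R (n+1) (m+2) + s * R (n+1) (m+3) + t * R (n+1) (m+4) :=
            hrec (n+1) (m+2)
          have e0 : R (n+1) 0 = a * R n 0 + b * R n 1 := hcol0 n
          have e1 : R (n+1) 1 = R n 0 + s * R n 1 + t * R n 2 := hrec n 0
          have g1 : R (n+1) (m+2) = R n (m+1) + s * R n (m+2) + t * R n (m+3) := hrec n (m+1)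
          have g2 : R (n+1) (m+3) = R n (m+2) + s * R n (m+3) + t * R n (m+4) := hrec n (m+2)
          have g3 : R (n+1) (m+4) = R n (m+3) + s * R n (m+4) + t * R n (m+5) := hrec n (m+3)
          have A1 : 0 ≤ R n 1 * R n (m+1) - R n 0 * R n (m+2) -
              t * (R n 2 * R n (m+2) - R n 1 * R n (m+3)) := hV 0 m (by omega)
          have A2 : 0 ≤ R n 1 * R n (m+2) - R n 0 * R n (m+3) -
              t * (R n 2 * R n (m+3) - R n 1 * R n (m+4)) := hV 0 (m+1) (by omega)
          have A3 : 0 ≤ R n 1 * R n (m+3) - R n 0 * R n (m+4) -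
              t * (R n 2 * R n (m+4) - R n 1 * R n (m+5)) := hV 0 (m+2) (by omega)
          have B1 : 0 ≤ R n 0 * R (n+1) (m+2) - R (n+1) 0 * R n (m+2) := hW (m+1)
          have B2 : 0 ≤ R n 0 * R (n+1) (m+3) - R (n+1) 0 * R n (m+3) := hW (m+2)
          have B3 : 0 ≤ R n 0 * R (n+1) (m+4) - R (n+1) 0 * R n (m+4) := hW (m+3)
          simp only [f0, fg, e0, e1, g1, g2, g3] at B1 B2 B3 ⊢
          linarith [mul_nonneg ha B1, mul_nonneg (mul_nonneg ha hs) B2,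
            mul_nonneg (mul_nonneg ha ht) B3, mul_nonneg hb A1,
            mul_nonneg (mul_nonneg hb hs) A2, mul_nonneg (mul_nonneg hb ht) A3]
  have step : ∀ n : ℕ, R (n+1) 0 * R (n+1) 0 ≤ R n 0 * R (n+2) 0 := by
    intro n
    have B : 0 ≤ R n 0 * R (n+1) 1 - R (n+1) 0 * R n 1 := (main n).2 0
    have e0 : R (n+1) 0 = a * R n 0 + b * R n 1 := hcol0 n
    have f0 : R (n+2) 0 = a * R (n+1) 0 + b * R (n+1) 1 := hcol0 (n+1)
    simp only [f0, e0] at B ⊢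
    have hB := mul_nonneg hb B
    nlinarith [hB]
  intro i j hij
  obtain ⟨m, rfl⟩ : ∃ m, j = i + 1 + m := ⟨j - (i+1), by omega⟩
  clear hij
  induction m with
  | zero => exact step i
  | succ m ih =>
    show R (i+1) 0 * R (i+1+m+1) 0 ≤ R i 0 * R (i+1+m+2) 0
    have ih' : R (i+1) 0 * R (i+1+m) 0 ≤ R i 0 * R (i+1+m+1) 0 := ih
    rcases eq_or_lt_of_le (hpos (i+1+m+1) 0) with h | h
    · have hz : R (i+1) 0 * R (i+1+m+1) 0 = 0 := by rw [← h, mul_zero]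
      have hr : 0 ≤ R i 0 * R (i+1+m+2) 0 := mul_nonneg (hpos i 0) (hpos (i+1+m+2) 0)
      linarith
    · have q1 : R (i+1) 0 * (R (i+1+m+1) 0 * R (i+1+m+1) 0) ≤
          R (i+1) 0 * (R (i+1+m) 0 * R (i+1+m+2) 0) :=
        mul_le_mul_of_nonneg_left (step (i+1+m)) (hpos (i+1) 0)
      have q2 : R (i+1) 0 * R (i+1+m) 0 * R (i+1+m+2) 0 ≤
          R i 0 * R (i+1+m+1) 0 * R (i+1+m+2) 0 :=
        mul_le_mul_of_nonneg_right ih' (hpos (i+1+m+2) 0)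
      nlinarith [q1, q2, h]
end

section
/- Let a,b,s,t be nonnegative reals with s² ≥ 4t and a·(s+√(s²−4t))/2 ≥ b. Then the recursive matrix R(a,b;s,t) is totally positive (TP). -/
open Matrix

def ColsTP {k : ℕ} (X : Fin k → ℕ → ℝ) : Prop :=
  ∀ c : Fin k → ℕ, StrictMono c → 0 ≤ (Matrix.of fun i j => X i (c j)).det

lemma colsTP_congr {k : ℕ} {X Y : Fin k → ℕ → ℝ} (h : ∀ i m, X i m = Y i m)
    (hX : ColsTP X) : ColsTP Y := by
  intro c hc
  have e : (Matrix.of fun i j => Y i (c j)) = (Matrix.of fun i j => X i (c j)) := by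
    ext i j; exact (h i (c j)).symm
  rw [e]; exact hX c hc

lemma colsTP_scale {k : ℕ} (X : Fin k → ℕ → ℝ) (d : ℕ → ℝ) (hd : ∀ m, 0 ≤ d m)
    (hX : ColsTP X) : ColsTP (fun i m => X i m * d m) := by
  intro c hc
  have e : (Matrix.of fun i j => X i (c j) * d (c j))
      = (Matrix.of fun i j => X i (c j)) * Matrix.diagonal (fun j => d (c j)) := by
    ext i j
    simp [Matrix.mul_diagonal]
  rw [e, Matrix.det_mul, Matrix.det_diagonal]
  exact mul_nonneg (hX c hc) (Finset.prod_nonneg fun j _ => hd _)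

lemma colsTP_transvection {k : ℕ} (X : Fin k → ℕ → ℝ) (p q : ℕ)
    (hpq : q = p + 1 ∨ p = q + 1) (cc : ℝ) (hcc : 0 ≤ cc) (hX : ColsTP X) :
    ColsTP (fun i m => X i m + (if m = q then cc * X i p else 0)) := by
  intro c hc
  by_cases hq : ∃ j0, c j0 = q
  · obtain ⟨j0, hj0⟩ := hq
    have hinj := hc.injective
    have hpq' : p ≠ q := by omega
    have hmat : (Matrix.of fun i j => X i (c j) + (if c j = q then cc * X i p else 0))
        = (Matrix.of fun i j => X i (c j)).updateCol j0
            ((fun i => X i (c j0)) + fun i => cc * X i p) := by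
      ext i j
      simp only [Matrix.of_apply, Matrix.updateCol_apply]
      by_cases hj : j = j0
      · subst hj
        simp [hj0]
      · rw [if_neg hj, if_neg (fun h => hj (hinj (h.trans hj0.symm)))]
        simp
    rw [hmat, Matrix.det_updateCol_add]
    have e1 : (Matrix.of fun i j => X i (c j)).updateCol j0 (fun i => X i (c j0))
        = Matrix.of fun i j => X i (c j) := by
      exact Matrix.updateCol_eq_self _ _
    have e2 : (fun i => cc * X i p) = cc • (fun i => X i p) := rfl
    rw [e1, e2, Matrix.det_updateCol_smul]
    have hrest : 0 ≤ ((Matrix.of fun i j => X i (c j)).updateCol j0 fun i => X i p).det := by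
      by_cases hp : ∃ j1, j1 ≠ j0 ∧ c j1 = p
      · obtain ⟨j1, hj1, hcj1⟩ := hp
        refine le_of_eq (Matrix.det_zero_of_column_eq hj1 fun i => ?_).symm
        rw [Matrix.updateCol_apply, Matrix.updateCol_apply, if_neg hj1, if_pos rfl]
        simp [hcj1]
      · push_neg at hp
        have hmat2 : (Matrix.of fun i j => X i (c j)).updateCol j0 (fun i => X i p)
            = Matrix.of fun i j => X i (Function.update c j0 p j) := by
          ext i j
          simp only [Matrix.of_apply, Matrix.updateCol_apply, Function.update_apply]
          by_cases hj : j = j0 <;> simp [hj]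
        rw [hmat2]
        apply hX
        intro i j hij
        rcases eq_or_ne i j0 with hi0 | hi0 <;> rcases eq_or_ne j j0 with hj0' | hj0'
        · exact absurd (hi0.trans hj0'.symm) (ne_of_lt hij)
        · subst hi0
          rw [Function.update_self, Function.update_of_ne hj0']
          have h1 : q < c j := hj0 ▸ hc hij
          have h2 : c j ≠ p := hp j hj0'
          omega
        · subst hj0'
          rw [Function.update_self, Function.update_of_ne hi0]
          have h1 : c i < q := hj0 ▸ hc hij
          have h2 : c i ≠ p := hp i hi0
          omega
        · rw [Function.update_of_ne hi0, Function.update_of_ne hj0']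
          exact hc hij
    exact add_nonneg (hX c hc) (mul_nonneg hcc hrest)
  · push_neg at hq
    have e : (Matrix.of fun i j => X i (c j) + (if c j = q then cc * X i p else 0))
        = Matrix.of fun i j => X i (c j) := by
      ext i j
      simp only [Matrix.of_apply]
      rw [if_neg (hq j), add_zero]
    rw [e]
    exact hX c hc
lemma colsTP_lowerBidiag {k : ℕ} (X : Fin k → ℕ → ℝ) (cf : ℕ → ℝ) (hcf : ∀ m, 0 ≤ cf m)
    (hX : ColsTP X) : ColsTP (fun i m => X i m + cf m * X i (m + 1)) := by
  have hA : ∀ n : ℕ, ColsTP (fun i m => if m < n then X i m + cf m * X i (m + 1) else X i m) := by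
    intro n
    induction n with
    | zero => exact colsTP_congr (fun i m => by simp) hX
    | succ n ih =>
      have h2 := colsTP_transvection _ (n + 1) n (Or.inr rfl) (cf n) (hcf n) ih
      refine colsTP_congr (fun i m => ?_) h2
      by_cases h : m = n
      · subst h
        rw [if_pos rfl, if_neg (lt_irrefl m), if_pos (Nat.lt_succ_self m),
          if_neg (by omega : ¬ m + 1 < m)]
      · rw [if_neg h, add_zero]
        by_cases h2 : m < n
        · rw [if_pos h2, if_pos (by omega)]
        · rw [if_neg h2, if_neg (by omega)]
  intro c hc
  have h := hA ((Finset.univ.sup c) + 1) c hc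
  refine le_of_le_of_eq h ?_
  congr 1
  ext i j
  simp only [Matrix.of_apply]
  rw [if_pos]
  have : c j ≤ Finset.univ.sup c := Finset.le_sup (Finset.mem_univ j)
  omega

lemma colsTP_upperBidiag {k : ℕ} (X : Fin k → ℕ → ℝ) (g : ℕ → ℝ) (hg : ∀ m, 0 ≤ g m)
    (hX : ColsTP X) :
    ColsTP (fun i m => X i m + (if m = 0 then 0 else g m * X i (m - 1))) := by
  intro c hc
  set Γ := Finset.univ.sup c with hΓ
  have hB : ∀ n : ℕ,
      ColsTP (fun i m => if Γ - n < m ∧ m ≤ Γ then X i m + g m * X i (m - 1) else X i m) := by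
    intro n
    induction n with
    | zero => exact colsTP_congr (fun i m => by rw [if_neg (by omega)]) hX
    | succ n ih =>
      by_cases hn : Γ - n = 0
      · exact colsTP_congr (fun i m => by
          by_cases h : Γ - n < m ∧ m ≤ Γ
          · rw [if_pos h, if_pos (by omega)]
          · rw [if_neg h, if_neg (by omega)]) ih
      · set q := Γ - n with hqdef
        have hq1 : 1 ≤ q := by omega
        have hqΓ : q ≤ Γ := by omega
        have h2 := colsTP_transvection _ (q - 1) q (Or.inl (by omega)) (g q) (hg q) ih
        refine colsTP_congr (fun i m => ?_) h2
        by_cases h : m = q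
        · subst h
          rw [if_pos rfl, if_neg (by omega), if_neg (by omega), if_pos (by omega)]
        · rw [if_neg h, add_zero]
          by_cases h2 : Γ - n < m ∧ m ≤ Γ
          · rw [if_pos h2, if_pos (by omega)]
          · rw [if_neg h2, if_neg (by omega)]
  have h := hB Γ c hc
  refine le_of_le_of_eq h ?_
  congr 1
  ext i j
  simp only [Matrix.of_apply]
  have hcj : c j ≤ Γ := Finset.le_sup (Finset.mem_univ j)
  by_cases h0 : c j = 0
  · rw [if_neg (by omega), if_pos h0, add_zero]
  · rw [if_pos (by omega), if_neg h0]

noncomputable def uSeq (a b s t : ℝ) : ℕ → ℝ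
  | 0 => a
  | 1 => s - b / a
  | (n + 2) => s - t / uSeq a b s t (n + 1)

lemma colsTP_step {k : ℕ} (a b s t : ℝ) (u : ℕ → ℝ) (hu : ∀ n, 0 < u n)
    (hu0 : u 0 = a) (hrec1 : u 1 + b / u 0 = s) (hrec2 : ∀ n, u (n + 2) + t / u (n + 1) = s)
    (hb : 0 ≤ b) (ht : 0 ≤ t) (X : Fin k → ℕ → ℝ) (hX : ColsTP X) :
    ColsTP (fun i m => if m = 0 then a * X i 0 + b * X i 1
        else X i (m - 1) + s * X i m + t * X i (m + 1)) := by
  set w : ℕ → ℝ := fun m => if m = 0 then b else t with hw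
  have hwn : ∀ m, 0 ≤ w m := fun m => by by_cases h : m = 0 <;> simp [hw, h, hb, ht]
  have h1 : ColsTP (fun i m => X i m * u m) := colsTP_scale X u (fun m => (hu m).le) hX
  have h2 : ColsTP (fun i m => (X i m * u m) + (w m / u (m + 1)) * (X i (m + 1) * u (m + 1))) :=
    colsTP_lowerBidiag _ (fun m => w m / u (m + 1)) (fun m => div_nonneg (hwn m) (hu _).le) h1
  have h2' : ColsTP (fun i m => u m * X i m + w m * X i (m + 1)) := by
    refine colsTP_congr (fun i m => ?_) h2
    have := (hu (m + 1)).ne'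
    field_simp
  have h3 := colsTP_upperBidiag _ (fun m => 1 / u (m - 1)) (fun m => (one_div_pos.mpr (hu _)).le) h2'
  refine colsTP_congr (fun i m => ?_) h3
  cases m with
  | zero => simp [hw, hu0]
  | succ m =>
    have hum := (hu m).ne'
    have hs' : u (m + 1) + w m / u m = s := by
      cases m with
      | zero => simpa [hw] using hrec1
      | succ m => simpa [hw] using hrec2 m
    simp only [if_neg (Nat.succ_ne_zero m)]
    simp only [Nat.add_sub_cancel]
    rw [← hs']
    have hwm : w (m + 1) = t := by simp [hw]
    rw [hwm]
    field_simp
    ring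

theorem core_TP (a b s t : ℝ) (ha : 0 < a) (hb : 0 ≤ b) (hs : 0 < s) (ht : 0 < t)
    (h1 : 4 * t < s ^ 2) (h2 : b < a * ((s + Real.sqrt (s ^ 2 - 4 * t)) / 2))
    (R : ℕ → ℕ → ℝ)
    (hR00 : R 0 0 = 1)
    (htri : ∀ n k, n < k → R n k = 0)
    (hcol0 : ∀ n, R (n + 1) 0 = a * R n 0 + b * R n 1)
    (hrec : ∀ n k, R (n + 1) (k + 1) = R n k + s * R n (k + 1) + t * R n (k + 2)) :
    IsTP R := by
  have hd : 0 < s ^ 2 - 4 * t := by linarith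
  set e := Real.sqrt (s ^ 2 - 4 * t) with he
  have he0 : 0 ≤ e := Real.sqrt_nonneg _
  have he2 : e ^ 2 = s ^ 2 - 4 * t := Real.sq_sqrt hd.le
  have hes : e < s := by
    have hlt : e ^ 2 < s ^ 2 := by rw [he2]; linarith
    exact lt_of_pow_lt_pow_left₀ 2 hs.le hlt
  set r' : ℝ := (s - e) / 2 with hr'def
  set r : ℝ := (s + e) / 2 with hrdef
  have hr'0 : 0 < r' := by rw [hr'def]; linarith
  have hr0 : 0 < r := by rw [hrdef]; linarith
  have hrr' : r * r' = t := by rw [hrdef, hr'def]; nlinarith [he2]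
  have hsum : r + r' = s := by rw [hrdef, hr'def]; ring
  have hba : b / a < r := (div_lt_iff₀ ha).2 (by rw [hrdef]; nlinarith [h2])
  set u : ℕ → ℝ := uSeq a b s t with hu_def
  have hu1 : ∀ n, r' ≤ u (n + 1) := by
    intro n
    induction n with
    | zero =>
      show r' ≤ s - b / a
      linarith
    | succ n ih =>
      show r' ≤ s - t / u (n + 1)
      have hup : 0 < u (n + 1) := lt_of_lt_of_le hr'0 ih
      have hdiv : t / u (n + 1) ≤ t / r' := by gcongr
      have htr : t / r' = r := by
        field_simp
        linarith [hrr']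
      linarith
  have hu : ∀ n, 0 < u n := by
    intro n
    cases n with
    | zero => exact ha
    | succ n => exact lt_of_lt_of_le hr'0 (hu1 n)
  have hrec1 : u 1 + b / u 0 = s := by
    show (s - b / a) + b / a = s
    ring
  have hrec2 : ∀ n, u (n + 2) + t / u (n + 1) = s := by
    intro n
    show (s - t / u (n + 1)) + t / u (n + 1) = s
    ring
  intro k₀ rows₀ cols₀ hrows₀ hcols₀
  suffices H : ∀ N k (rows cols : Fin k → ℕ), StrictMono rows → StrictMono cols →
      (∑ i, rows i) + k ≤ N → 0 ≤ (Matrix.of fun i j => R (rows i) (cols j)).det from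
    H _ k₀ rows₀ cols₀ hrows₀ hcols₀ le_rfl
  intro N
  induction N with
  | zero =>
    intro k rows cols _ _ hN
    have hk : k = 0 := by omega
    subst hk
    simp [Matrix.det_isEmpty]
  | succ N ih =>
    intro k rows cols hr hc hN
    cases k with
    | zero => simp [Matrix.det_isEmpty]
    | succ k =>
      by_cases h0 : rows 0 = 0
      · by_cases hc0 : cols 0 = 0
        · rw [Matrix.det_succ_row_zero, Finset.sum_eq_single 0]
          · have hA00 : (Matrix.of fun i j => R (rows i) (cols j)) 0 0 = 1 := by
              simp [h0, hc0, hR00]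
            rw [hA00]
            simp only [Fin.val_zero, pow_zero, one_mul, mul_one]
            have hsub : ((Matrix.of fun i j => R (rows i) (cols j)).submatrix Fin.succ
                (Fin.succAbove 0)) = Matrix.of fun i j => R (rows (Fin.succ i)) (cols (Fin.succ j)) := by
              ext i j
              simp [Fin.succAbove_zero]
            rw [hsub]
            apply ih k (fun i => rows (Fin.succ i)) (fun j => cols (Fin.succ j))
              (hr.comp Fin.strictMono_succ) (hc.comp Fin.strictMono_succ)
            have hsplit : ∑ i : Fin (k + 1), rows i
                = rows 0 + ∑ i : Fin k, rows (Fin.succ i) := Fin.sum_univ_succ _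
            omega
          · intro j _ hj
            have hcj : 0 < cols j := by
              have := hc (show (0 : Fin (k + 1)) < j by
                exact lt_of_le_of_ne (Fin.zero_le j) (Ne.symm hj))
              omega
            have : (Matrix.of fun i j => R (rows i) (cols j)) 0 j = 0 := by
              simp only [Matrix.of_apply, h0]
              exact htri 0 (cols j) hcj
            rw [this]
            ring
          · intro h; exact absurd (Finset.mem_univ _) h
        · refine le_of_eq (Matrix.det_eq_zero_of_row_eq_zero 0 fun j => ?_).symm
          have hcj : 0 < cols j := by
            have h1 : cols 0 ≤ cols j := hc.monotone (Fin.zero_le j)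
            omega
          simp only [Matrix.of_apply, h0]
          exact htri 0 (cols j) hcj
      · have h1r : ∀ i, 1 ≤ rows i := by
          intro i
          have := hr.monotone (Fin.zero_le i)
          omega
        have hX : ColsTP (fun (i : Fin (k + 1)) m => R (rows i - 1) m) := by
          intro c hcm
          apply ih (k + 1) (fun i => rows i - 1) c ?_ hcm ?_
          · intro i j hij
            show rows i - 1 < rows j - 1
            have := hr hij
            have := h1r i
            omega
          · have hsum2 : ∑ i : Fin (k + 1), (rows i - 1 + 1)
                = (∑ i : Fin (k + 1), (rows i - 1)) + (k + 1) := by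
              rw [Finset.sum_add_distrib]
              simp
            have hsum3 : ∑ i : Fin (k + 1), (rows i - 1 + 1) = ∑ i : Fin (k + 1), rows i :=
              Finset.sum_congr rfl fun i _ => by have := h1r i; omega
            show (∑ i : Fin (k + 1), (rows i - 1)) + (k + 1) ≤ N
            omega
        have hstep := colsTP_step a b s t u hu rfl hrec1 hrec2 hb ht.le _ hX cols hc
        refine le_of_le_of_eq hstep ?_
        congr 1
        ext i j
        simp only [Matrix.of_apply]
        have hri : rows i - 1 + 1 = rows i := by have := h1r i; omega
        cases hcj : cols j with
        | zero =>
          rw [if_pos rfl, ← hri, hcol0 (rows i - 1)]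
          simp
        | succ m =>
          rw [if_neg (Nat.succ_ne_zero m), ← hri, hrec (rows i - 1) m]
          simp

noncomputable def Rfun (a b s t : ℝ) : ℕ → ℕ → ℝ
  | 0, 0 => 1
  | 0, _ + 1 => 0
  | n + 1, 0 => a * Rfun a b s t n 0 + b * Rfun a b s t n 1
  | n + 1, k + 1 => Rfun a b s t n k + s * Rfun a b s t n (k + 1) + t * Rfun a b s t n (k + 2)

lemma Rfun_tri (a b s t : ℝ) : ∀ n k, n < k → Rfun a b s t n k = 0 := by
  intro n
  induction n with
  | zero =>
    intro k hk
    match k, hk with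
    | k + 1, _ => rfl
  | succ n ih =>
    intro k hk
    match k, hk with
    | k + 1, hk =>
      show Rfun a b s t n k + s * Rfun a b s t n (k + 1) + t * Rfun a b s t n (k + 2) = 0
      rw [ih k (by omega), ih (k + 1) (by omega), ih (k + 2) (by omega)]
      ring

lemma Rfun_continuous (n k : ℕ) :
    Continuous (fun p : ℝ × ℝ × ℝ × ℝ => Rfun p.1 p.2.1 p.2.2.1 p.2.2.2 n k) := by
  induction n generalizing k with
  | zero =>
    cases k with
    | zero => exact continuous_const
    | succ k => exact continuous_const
  | succ n ih =>
    cases k with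
    | zero =>
      show Continuous (fun p : ℝ × ℝ × ℝ × ℝ =>
        p.1 * Rfun p.1 p.2.1 p.2.2.1 p.2.2.2 n 0 + p.2.1 * Rfun p.1 p.2.1 p.2.2.1 p.2.2.2 n 1)
      exact (continuous_fst.mul (ih 0)).add (continuous_snd.fst.mul (ih 1))
    | succ k =>
      show Continuous (fun p : ℝ × ℝ × ℝ × ℝ =>
        Rfun p.1 p.2.1 p.2.2.1 p.2.2.2 n k + p.2.2.1 * Rfun p.1 p.2.1 p.2.2.1 p.2.2.2 n (k + 1)
          + p.2.2.2 * Rfun p.1 p.2.1 p.2.2.1 p.2.2.2 n (k + 2))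
      exact ((ih k).add (continuous_snd.snd.fst.mul (ih (k + 1)))).add
        (continuous_snd.snd.snd.mul (ih (k + 2)))

theorem recursiveMatrix_TP (a b s t : ℝ) (ha : 0 ≤ a) (hb : 0 ≤ b) (hs : 0 ≤ s)
    (ht : 0 ≤ t) (h1 : s ^ 2 ≥ 4 * t) (h2 : a * (s + Real.sqrt (s ^ 2 - 4 * t)) / 2 ≥ b)
    (R : ℕ → ℕ → ℝ)
    (hR00 : R 0 0 = 1)
    (htri : ∀ n k, n < k → R n k = 0)
    (hcol0 : ∀ n, R (n + 1) 0 = a * R n 0 + b * R n 1)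
    (hrec : ∀ n k, R (n + 1) (k + 1) = R n k + s * R n (k + 1) + t * R n (k + 2)) :
    IsTP R := by
  have hReq : ∀ n k, R n k = Rfun a b s t n k := by
    intro n
    induction n with
    | zero =>
      intro k
      cases k with
      | zero => exact hR00
      | succ k => rw [htri 0 (k + 1) (Nat.succ_pos k)]; rfl
    | succ n ih =>
      intro k
      cases k with
      | zero =>
        rw [hcol0 n, ih 0, ih 1]
        rfl
      | succ k =>
        rw [hrec n k, ih k, ih (k + 1), ih (k + 2)]
        rfl
  intro k rows cols hrows hcols
  have hmat : (Matrix.of fun i j => R (rows i) (cols j))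
      = Matrix.of fun i j => Rfun a b s t (rows i) (cols j) := by
    ext i j
    simp only [Matrix.of_apply]
    exact hReq _ _
  rw [hmat]
  set f : ℝ → ℝ := fun ε =>
    (Matrix.of fun i j => Rfun (a + ε) b (s + ε) (t + ε ^ 2 / 8) (rows i) (cols j)).det with hf
  have hcont : Continuous f := by
    apply Continuous.matrix_det
    apply continuous_matrix
    intro i j
    exact (Rfun_continuous (rows i) (cols j)).comp
      (continuous_const.add continuous_id |>.prodMk
        (continuous_const.prodMk ((continuous_const.add continuous_id).prodMk
          (continuous_const.add ((continuous_pow 2).div_const 8)))))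
  have hf0 : f 0 = (Matrix.of fun i j => Rfun a b s t (rows i) (cols j)).det := by
    rw [hf]
    norm_num
  have hpos : ∀ n : ℕ, 0 ≤ f (1 / ((n : ℝ) + 1)) := by
    intro n
    set ε : ℝ := 1 / ((n : ℝ) + 1) with hεdef
    have hε : 0 < ε := by positivity
    apply core_TP (a + ε) b (s + ε) (t + ε ^ 2 / 8) (by linarith) hb (by linarith)
      (by positivity) ?_ ?_ (Rfun (a + ε) b (s + ε) (t + ε ^ 2 / 8)) rfl
      (Rfun_tri _ _ _ _) (fun n => rfl) (fun n k => rfl) _ rows cols hrows hcols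
    · nlinarith
    · -- b < (a+ε) * ((s+ε + sqrt ((s+ε)^2 - 4*(t+ε^2/8)))/2)
      set e' := Real.sqrt ((s + ε) ^ 2 - 4 * (t + ε ^ 2 / 8)) with he'
      set e := Real.sqrt (s ^ 2 - 4 * t) with he
      have he0 : 0 ≤ e := Real.sqrt_nonneg _
      have hee' : e ≤ e' := Real.sqrt_le_sqrt (by nlinarith)
      have hb2 : b ≤ a * (s + e) / 2 := h2
      have key : (a + ε) * ((s + ε + e') / 2)
          = a * (s + e) / 2 + (a * (ε + e' - e) + ε * (s + ε + e')) / 2 := by ring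
      have hpos1 : 0 ≤ a * (ε + e' - e) := mul_nonneg ha (by linarith)
      have hpos2 : 0 < ε * (s + ε + e') := by
        apply mul_pos hε
        have : 0 ≤ e' := Real.sqrt_nonneg _
        linarith
      rw [key]
      linarith
  have hseq : Filter.Tendsto (fun n : ℕ => f (1 / ((n : ℝ) + 1))) Filter.atTop (nhds (f 0)) :=
    (hcont.tendsto 0).comp tendsto_one_div_add_atTop_nhds_zero_nat
  rw [← hf0]
  exact ge_of_tendsto hseq (Filter.Eventually.of_forall hpos)
end

section
/- Let a,b,r,s,t be nonnegative reals and let J be the infinite Jacobi matrix with J_{0,0}=a, J_{1,0}=b, J_{i,i}=s for i≥1, J_{i,i+1}=r for i≥0, J_{i,i-1}=t for i≥2, and all other entries 0. Then J is totally positive of order 2 (TP_2) if and only if a·s ≥ b·r and s² ≥ r·t. -/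
/-- The Jacobi matrix with `J 0 0 = a`, `J 1 0 = b`, diagonal `s` from row 1 on,
superdiagonal `r`, and subdiagonal `t` from row 2 on. -/
def jacobiMatrix (a b r s t : ℝ) : ℕ → ℕ → ℝ := fun i j =>
  if i = 0 ∧ j = 0 then a
  else if i = 1 ∧ j = 0 then b
  else if i = j ∧ 1 ≤ i then s
  else if j = i + 1 then r
  else if i = j + 1 ∧ 2 ≤ i then t
  else 0

lemma jacobi_nonneg (a b r s t : ℝ) (ha : 0 ≤ a) (hb : 0 ≤ b) (hr : 0 ≤ r)
    (hs : 0 ≤ s) (ht : 0 ≤ t) (i j : ℕ) : 0 ≤ jacobiMatrix a b r s t i j := by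
  unfold jacobiMatrix
  split_ifs <;> first | assumption | exact le_refl 0

lemma jacobi_near (a b r s t : ℝ) (i j : ℕ) (h : jacobiMatrix a b r s t i j ≠ 0) :
    i = j ∨ i = j + 1 ∨ j = i + 1 := by
  unfold jacobiMatrix at h
  split_ifs at h <;> first | omega | exact absurd rfl h

lemma jacobi_00 (a b r s t : ℝ) : jacobiMatrix a b r s t 0 0 = a := rfl
lemma jacobi_10 (a b r s t : ℝ) : jacobiMatrix a b r s t 1 0 = b := rfl
lemma jacobi_diag (a b r s t : ℝ) (i : ℕ) (hi : 1 ≤ i) :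
    jacobiMatrix a b r s t i i = s := by
  unfold jacobiMatrix
  split_ifs <;> first | rfl | omega | simp_all
lemma jacobi_sup (a b r s t : ℝ) (i : ℕ) :
    jacobiMatrix a b r s t i (i + 1) = r := by
  unfold jacobiMatrix
  split_ifs <;> first | rfl | omega | simp_all
lemma jacobi_sub (a b r s t : ℝ) (i : ℕ) (hi : 1 ≤ i) :
    jacobiMatrix a b r s t (i + 1) i = t := by
  unfold jacobiMatrix
  split_ifs <;> first | rfl | omega | simp_all

theorem jacobi_TP2_iff (a b r s t : ℝ) (ha : 0 ≤ a) (hb : 0 ≤ b) (hr : 0 ≤ r)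
    (hs : 0 ≤ s) (ht : 0 ≤ t) :
    IsTPOrder 2 (jacobiMatrix a b r s t) ↔ a * s ≥ b * r ∧ s ^ 2 ≥ r * t := by
  set M := jacobiMatrix a b r s t with hM
  constructor
  · intro h
    constructor
    · have := h 2 le_rfl ![0, 1] ![0, 1] (by decide) (by decide)
      rw [Matrix.det_fin_two] at this
      simp only [Matrix.of_apply, Matrix.cons_val_zero, Matrix.cons_val_one,
        Matrix.head_cons] at this
      rw [hM, jacobi_00, jacobi_10, jacobi_diag a b r s t 1 le_rfl,
        show (1:ℕ) = 0 + 1 from rfl, jacobi_sup] at this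
      linarith
    · have := h 2 le_rfl ![1, 2] ![1, 2] (by decide) (by decide)
      rw [Matrix.det_fin_two] at this
      simp only [Matrix.of_apply, Matrix.cons_val_zero, Matrix.cons_val_one,
        Matrix.head_cons] at this
      rw [hM, jacobi_diag a b r s t 1 le_rfl, jacobi_diag a b r s t 2 (by norm_num),
        show (2:ℕ) = 1 + 1 from rfl, jacobi_sup, jacobi_sub a b r s t 1 le_rfl] at this
      nlinarith
  · rintro ⟨h1, h2⟩ k hk rows cols hrows hcols
    interval_cases k
    · simp [Matrix.det_fin_zero]
    · rw [Matrix.det_fin_one]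
      exact jacobi_nonneg a b r s t ha hb hr hs ht _ _
    · rw [Matrix.det_fin_two]
      simp only [Matrix.of_apply]
      by_cases hz : M (rows 0) (cols 1) = 0 ∨ M (rows 1) (cols 0) = 0
      · have : M (rows 0) (cols 1) * M (rows 1) (cols 0) = 0 := by
          rcases hz with hz | hz <;> rw [hz] <;> ring
        rw [this]
        have := mul_nonneg (jacobi_nonneg a b r s t ha hb hr hs ht (rows 0) (cols 0))
          (jacobi_nonneg a b r s t ha hb hr hs ht (rows 1) (cols 1))
        linarith
      · push_neg at hz
        have h01 := jacobi_near a b r s t _ _ hz.1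
        have h10 := jacobi_near a b r s t _ _ hz.2
        have hlt1 : rows 0 < rows 1 := hrows (by decide : (0 : Fin 2) < 1)
        have hlt2 : cols 0 < cols 1 := hcols (by decide : (0 : Fin 2) < 1)
        have key : cols 0 = rows 0 ∧ rows 1 = rows 0 + 1 ∧ cols 1 = rows 0 + 1 := by
          omega
        obtain ⟨e1, e2, e3⟩ := key
        rw [e1, e2, e3]
        rcases Nat.eq_zero_or_pos (rows 0) with h0 | h0
        · rw [h0]
          rw [hM, jacobi_00, jacobi_10, jacobi_diag a b r s t 1 le_rfl, jacobi_sup]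
          linarith
        · rw [hM, jacobi_diag a b r s t (rows 0) h0,
            jacobi_diag a b r s t (rows 0 + 1) (by omega), jacobi_sup,
            jacobi_sub a b r s t (rows 0) h0]
          nlinarith
end

section
/- Let a,b,r,s,t be nonnegative reals and let J be the infinite Jacobi matrix with J_{0,0}=a, J_{1,0}=b, J_{i,i}=s for i≥1, J_{i,i+1}=r for i≥0, J_{i,i-1}=t for i≥2, and all other entries 0. Then J is totally positive (TP) if and only if s² ≥ 4rt and a·(s+√(s²−4rt))/2 ≥ b·r. -/
variable {a b r s t : ℝ}

lemma jm_00 : jacobiMatrix a b r s t 0 0 = a := by simp [jacobiMatrix]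
lemma jm_10 : jacobiMatrix a b r s t 1 0 = b := by simp [jacobiMatrix]
lemma jm_diag {i : ℕ} (h : 1 ≤ i) : jacobiMatrix a b r s t i i = s := by
  simp only [jacobiMatrix]; split_ifs <;> first | rfl | omega | simp_all | simp_all
lemma jm_super (i : ℕ) : jacobiMatrix a b r s t i (i+1) = r := by
  simp only [jacobiMatrix]; split_ifs <;> first | rfl | omega | simp_all
lemma jm_sub {j : ℕ} (h : 1 ≤ j) : jacobiMatrix a b r s t (j+1) j = t := by
  simp only [jacobiMatrix]; split_ifs <;> first | rfl | omega | simp_all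
lemma jm_zero_right {i j : ℕ} (h : i + 2 ≤ j) : jacobiMatrix a b r s t i j = 0 := by
  simp only [jacobiMatrix]; split_ifs <;> first | rfl | omega | simp_all
lemma jm_zero_left {i j : ℕ} (h : j + 2 ≤ i) : jacobiMatrix a b r s t i j = 0 := by
  simp only [jacobiMatrix]; split_ifs <;> first | rfl | omega | simp_all
lemma jm_nonneg (ha : 0 ≤ a) (hb : 0 ≤ b) (hr : 0 ≤ r) (hs : 0 ≤ s) (ht : 0 ≤ t)
    (i j : ℕ) : 0 ≤ jacobiMatrix a b r s t i j := by
  simp only [jacobiMatrix]; split_ifs <;> first | assumption | exact le_refl 0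

open Matrix in
lemma det_row0_single {k : ℕ} (A : Matrix (Fin (k+1)) (Fin (k+1)) ℝ)
    (h : ∀ j, j ≠ 0 → A 0 j = 0) :
    A.det = A 0 0 * (A.submatrix Fin.succ Fin.succ).det := by
  rw [Matrix.det_succ_row_zero, Fin.sum_univ_succ]
  simp [h, Fin.succ_ne_zero]

open Matrix in
lemma det_col0_single {k : ℕ} (A : Matrix (Fin (k+1)) (Fin (k+1)) ℝ)
    (h : ∀ i, i ≠ 0 → A i 0 = 0) :
    A.det = A 0 0 * (A.submatrix Fin.succ Fin.succ).det := by
  rw [Matrix.det_succ_column_zero, Fin.sum_univ_succ]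
  simp [h, Fin.succ_ne_zero]

noncomputable def Dseq (r s t : ℝ) : ℕ → ℝ
  | 0 => 1
  | 1 => s
  | (n+2) => s * Dseq r s t (n+1) - r * t * Dseq r s t n

lemma detA : ∀ k p : ℕ, 1 ≤ p → ∀ (A : Matrix (Fin k) (Fin k) ℝ),
    (∀ i j : Fin k, A i j = jacobiMatrix a b r s t (p + i) (p + j)) →
    A.det = Dseq r s t k := by
  intro k
  induction k using Nat.strong_induction_on with
  | _ k ih =>
    match k with
    | 0 => intro p hp A hA; simp [Matrix.det_fin_zero, Dseq]
    | 1 =>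
      intro p hp A hA
      rw [Matrix.det_fin_one, hA]
      simpa [Dseq] using jm_diag (i := p + 0) (by omega)
    | (k+2) =>
      intro p hp A hA
      rw [Matrix.det_succ_row_zero, Fin.sum_univ_succ, Fin.sum_univ_succ]
      have hsum0 : ∀ j : Fin k,
          (-1:ℝ) ^ ((j.succ.succ : Fin (k+2)) : ℕ) * A 0 j.succ.succ *
            (A.submatrix Fin.succ (j.succ.succ).succAbove).det = 0 := by
        intro j
        have : A 0 j.succ.succ = 0 := by
          rw [hA]
          exact jm_zero_right (by simp only [Fin.val_succ, Fin.val_zero]; omega)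
        simp [this]
      rw [Finset.sum_congr rfl (fun j _ => hsum0 j), Finset.sum_const_zero]
      -- first term
      have h00 : A 0 0 = s := by
        rw [hA]; simpa using jm_diag (i := p + 0) (by omega)
      have hd1 : (A.submatrix Fin.succ ((0 : Fin (k+2)).succAbove)).det
          = Dseq r s t (k+1) := by
        rw [Fin.succAbove_zero]
        apply ih (k+1) (by omega) (p+1) (by omega)
        intro i j
        simp only [Matrix.submatrix_apply]
        rw [hA]
        congr 1 <;> simp [Fin.val_succ] <;> try omega
      -- second term
      have h01 : A 0 1 = r := by
        rw [hA]
        have : (((1 : Fin (k+2))) : ℕ) = 1 := rfl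
        rw [this]
        exact jm_super p
      have hd2 : (A.submatrix Fin.succ ((1 : Fin (k+2)).succAbove)).det
          = t * Dseq r s t k := by
        set B := A.submatrix Fin.succ ((1 : Fin (k+2)).succAbove) with hB
        have hab0 : (1 : Fin (k+2)).succAbove 0 = 0 := by
          apply Fin.succAbove_of_castSucc_lt
          simp [Fin.lt_def]
        have habs : ∀ j : Fin k, (1 : Fin (k+2)).succAbove j.succ = j.succ.succ := by
          intro j
          apply Fin.succAbove_of_le_castSucc
          simp [Fin.le_def, Fin.val_succ]
        have hcol : ∀ i : Fin (k+1), i ≠ 0 → B i 0 = 0 := by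
          intro i hi
          show A i.succ ((1 : Fin (k+2)).succAbove 0) = 0
          rw [hab0, hA]
          apply jm_zero_left
          have : 1 ≤ (i : ℕ) := by
            rcases Nat.eq_zero_or_pos (i : ℕ) with h | h
            · exact absurd (Fin.ext h) hi
            · exact h
          simp [Fin.val_succ]; omega
        rw [det_col0_single B hcol]
        have hB00 : B 0 0 = t := by
          show A (Fin.succ 0) ((1 : Fin (k+2)).succAbove 0) = t
          rw [hab0, hA]
          have : ((Fin.succ (0 : Fin (k+1)) : Fin (k+2)) : ℕ) = 1 := rfl
          rw [this]
          have := jm_sub (a := a) (b := b) (r := r) (s := s) (t := t) (j := p) (by omega)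
          simpa using this
        rw [hB00]
        congr 1
        apply ih k (by omega) (p+2) (by omega)
        intro i j
        show A i.succ.succ ((1 : Fin (k+2)).succAbove j.succ) = _
        rw [habs j, hA]
        congr 1 <;> simp [Fin.val_succ] <;> try omega
      rw [Fin.succ_zero_eq_one, h00, h01, hd1, hd2]
      have c0 : (((0 : Fin (k+2))) : ℕ) = 0 := rfl
      have c1 : (((1 : Fin (k+2))) : ℕ) = 1 := rfl
      rw [c0, c1]
      show _ = s * Dseq r s t (k+1) - r * t * Dseq r s t k
      ring

noncomputable def Eseq (a b r s t : ℝ) : ℕ → ℝ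
  | 0 => 1
  | 1 => a
  | (n+2) => a * Dseq r s t (n+1) - b * r * Dseq r s t n

lemma detB : ∀ (k : ℕ) (A : Matrix (Fin k) (Fin k) ℝ),
    (∀ i j : Fin k, A i j = jacobiMatrix a b r s t i j) →
    A.det = Eseq a b r s t k := by
  intro k
  match k with
  | 0 => intro A hA; simp [Matrix.det_fin_zero, Eseq]
  | 1 =>
    intro A hA
    rw [Matrix.det_fin_one, hA]
    simpa [Eseq] using jm_00 (a := a) (b := b) (r := r) (s := s) (t := t)
  | (k+2) =>
    intro A hA
    rw [Matrix.det_succ_column_zero, Fin.sum_univ_succ, Fin.sum_univ_succ]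
    have hsum0 : ∀ i : Fin k,
        (-1:ℝ) ^ ((i.succ.succ : Fin (k+2)) : ℕ) * A i.succ.succ 0 *
          (A.submatrix (i.succ.succ).succAbove Fin.succ).det = 0 := by
      intro i
      have : A i.succ.succ 0 = 0 := by
        rw [hA]
        exact jm_zero_left (by simp only [Fin.val_succ, Fin.val_zero]; omega)
      simp [this]
    rw [Finset.sum_congr rfl (fun i _ => hsum0 i), Finset.sum_const_zero]
    have h00 : A 0 0 = a := by rw [hA]; exact jm_00
    have hd1 : (A.submatrix ((0 : Fin (k+2)).succAbove) Fin.succ).det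
        = Dseq r s t (k+1) := by
      rw [Fin.succAbove_zero]
      apply detA (k+1) 1 (by omega)
      intro i j
      simp only [Matrix.submatrix_apply]
      rw [hA]
      congr 1 <;> simp [Fin.val_succ] <;> try omega
    have h10 : A 1 0 = b := by
      rw [hA]
      have c1 : (((1 : Fin (k+2))) : ℕ) = 1 := rfl
      rw [c1]
      exact jm_10
    have hd2 : (A.submatrix ((1 : Fin (k+2)).succAbove) Fin.succ).det
        = r * Dseq r s t k := by
      set B := A.submatrix ((1 : Fin (k+2)).succAbove) Fin.succ with hB
      have hab0 : (1 : Fin (k+2)).succAbove 0 = 0 := by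
        apply Fin.succAbove_of_castSucc_lt
        simp [Fin.lt_def]
      have habs : ∀ j : Fin k, (1 : Fin (k+2)).succAbove j.succ = j.succ.succ := by
        intro j
        apply Fin.succAbove_of_le_castSucc
        simp [Fin.le_def, Fin.val_succ]
      have hrow : ∀ j : Fin (k+1), j ≠ 0 → B 0 j = 0 := by
        intro j hj
        show A ((1 : Fin (k+2)).succAbove 0) j.succ = 0
        rw [hab0, hA]
        apply jm_zero_right
        have : 1 ≤ (j : ℕ) := by
          rcases Nat.eq_zero_or_pos (j : ℕ) with h | h
          · exact absurd (Fin.ext h) hj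
          · exact h
        simp only [Fin.val_succ, Fin.val_zero]; omega
      rw [det_row0_single B hrow]
      have hB00 : B 0 0 = r := by
        show A ((1 : Fin (k+2)).succAbove 0) (Fin.succ 0) = r
        rw [hab0, hA]
        have c0 : ((0 : Fin (k+2)) : ℕ) = 0 := rfl
        have c1 : ((Fin.succ (0 : Fin (k+1)) : Fin (k+2)) : ℕ) = 1 := rfl
        rw [c0, c1]
        exact jm_super 0
      rw [hB00]
      congr 1
      apply detA k 2 (by omega)
      intro i j
      show A ((1 : Fin (k+2)).succAbove i.succ) j.succ.succ = _
      rw [habs i, hA]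
      congr 1 <;> simp [Fin.val_succ] <;> try omega
    rw [Fin.succ_zero_eq_one, h00, h10, hd1, hd2]
    have c0 : (((0 : Fin (k+2))) : ℕ) = 0 := rfl
    have c1 : (((1 : Fin (k+2))) : ℕ) = 1 := rfl
    rw [c0, c1]
    show _ = a * Dseq r s t (k+1) - b * r * Dseq r s t k
    ring



lemma Dseq_step {r s t L m : ℝ} (hsum : L + m = s) (hprod : L * m = r * t) :
    ∀ n, Dseq r s t (n+1) = L * Dseq r s t n + m ^ (n+1) := by
  intro n
  induction n using Nat.strong_induction_on with
  | _ n ih =>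
    match n with
    | 0 => show s = L * 1 + m ^ 1; rw [← hsum]; ring
    | (n+1) =>
      have h1 := ih n (by omega)
      show s * Dseq r s t (n+1) - r * t * Dseq r s t n = _
      rw [h1, ← hsum, ← hprod]; ring

lemma lam_mu (r s t : ℝ) (hr : 0 ≤ r) (ht : 0 ≤ t) (hs : 0 ≤ s) (h : 4 * r * t ≤ s ^ 2) :
    ((s + Real.sqrt (s ^ 2 - 4 * r * t)) / 2) + ((s - Real.sqrt (s ^ 2 - 4 * r * t)) / 2) = s ∧
    ((s + Real.sqrt (s ^ 2 - 4 * r * t)) / 2) * ((s - Real.sqrt (s ^ 2 - 4 * r * t)) / 2) = r * t ∧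
    0 ≤ ((s - Real.sqrt (s ^ 2 - 4 * r * t)) / 2) ∧
    ((s - Real.sqrt (s ^ 2 - 4 * r * t)) / 2) ≤ ((s + Real.sqrt (s ^ 2 - 4 * r * t)) / 2) := by
  have h0 : 0 ≤ s ^ 2 - 4 * r * t := by linarith
  have hsq : Real.sqrt (s ^ 2 - 4 * r * t) ^ 2 = s ^ 2 - 4 * r * t := Real.sq_sqrt h0
  have hle : Real.sqrt (s ^ 2 - 4 * r * t) ≤ s := by
    have : Real.sqrt (s ^ 2 - 4 * r * t) ≤ Real.sqrt (s ^ 2) := by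
      apply Real.sqrt_le_sqrt; nlinarith
    rwa [Real.sqrt_sq hs] at this
  have hnn : 0 ≤ Real.sqrt (s ^ 2 - 4 * r * t) := Real.sqrt_nonneg _
  refine ⟨by ring, by nlinarith, by linarith, by linarith⟩

lemma Dseq_ge_pow {r s t L m : ℝ} (hsum : L + m = s) (hprod : L * m = r * t)
    (hm : 0 ≤ m) (hL : 0 ≤ L) : ∀ n, L ^ n ≤ Dseq r s t n := by
  intro n
  induction n with
  | zero => simp [Dseq]
  | succ n ih =>
    rw [Dseq_step hsum hprod n]
    have := pow_nonneg hm (n+1)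
    calc L ^ (n+1) = L * L ^ n := by ring
    _ ≤ L * Dseq r s t n := by nlinarith [pow_nonneg hL n]
    _ ≤ _ := by linarith

lemma Dseq_nonneg {r s t L m : ℝ} (hsum : L + m = s) (hprod : L * m = r * t)
    (hm : 0 ≤ m) (hL : 0 ≤ L) : ∀ n, 0 ≤ Dseq r s t n :=
  fun n => le_trans (pow_nonneg hL n) (Dseq_ge_pow hsum hprod hm hL n)

lemma Dseq_succ_ge {r s t L m : ℝ} (hsum : L + m = s) (hprod : L * m = r * t)
    (hm : 0 ≤ m) (hL : 0 ≤ L) : ∀ n, L * Dseq r s t n ≤ Dseq r s t (n+1) := by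
  intro n
  rw [Dseq_step hsum hprod n]
  have := pow_nonneg hm (n+1)
  linarith

lemma Dseq_eq_of_eq {r s t L : ℝ} (hsum : L + L = s) (hprod : L * L = r * t) :
    ∀ n, Dseq r s t n = (n+1 : ℝ) * L ^ n := by
  intro n
  induction n with
  | zero => simp [Dseq]
  | succ n ih =>
    rw [Dseq_step hsum hprod n, ih]
    push_cast
    ring


lemma strictMono_fin_le {k : ℕ} (f : Fin k → ℕ) (hf : StrictMono f) :
    ∀ (d : ℕ) (i j : Fin k), (j : ℕ) = (i : ℕ) + d → f i + d ≤ f j := by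
  intro d
  induction d with
  | zero => intro i j h; have : j = i := Fin.ext (by omega); simp [this]
  | succ d ih =>
    intro i j h
    have hj' : ((i : ℕ) + d) < k := by omega
    set j' : Fin k := ⟨(i : ℕ) + d, hj'⟩ with hj'def
    have h1 : f i + d ≤ f j' := ih i j' rfl
    have h2 : f j' < f j := hf (by simp [Fin.lt_def, hj'def]; omega)
    omega


open Matrix in
lemma tridiag_TP (M : ℕ → ℕ → ℝ)
    (hz1 : ∀ i j : ℕ, i + 2 ≤ j → M i j = 0)
    (hz2 : ∀ i j : ℕ, j + 2 ≤ i → M i j = 0)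
    (hpos : ∀ i j : ℕ, 0 ≤ M i j)
    (hmin : ∀ p k : ℕ, 0 ≤ (Matrix.of fun i j : Fin k => M (p + i) (p + j)).det) :
    ∀ k (rows cols : Fin k → ℕ), StrictMono rows → StrictMono cols →
      0 ≤ (Matrix.of fun i j => M (rows i) (cols j)).det := by
  intro k
  induction k using Nat.strong_induction_on with
  | _ k ih =>
    match k with
    | 0 => intro rows cols _ _; simp [Matrix.det_fin_zero]
    | (n+1) =>
      intro rows cols hrows hcols
      set A : Matrix (Fin (n+1)) (Fin (n+1)) ℝ :=
        Matrix.of fun i j => M (rows i) (cols j) with hAdef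
      have hA : ∀ i j, A i j = M (rows i) (cols j) := fun i j => rfl
      rcases lt_trichotomy (rows 0) (cols 0) with hlt | heq | hgt
      · -- rows 0 < cols 0
        rcases Nat.lt_or_ge (rows 0 + 1) (cols 0) with h2 | h2
        · -- rows 0 + 2 ≤ cols 0 : row 0 is zero
          have hz : A.det = 0 := Matrix.det_eq_zero_of_row_eq_zero 0 (fun j => by
            rw [hA]
            exact hz1 _ _ (le_trans (by omega) (hcols.monotone (Fin.zero_le j))))
          rw [hz]
        · -- cols 0 = rows 0 + 1
          have hc0 : cols 0 = rows 0 + 1 := by omega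
          have hsingle : ∀ j, j ≠ 0 → A 0 j = 0 := by
            intro j hj
            rw [hA]
            apply hz1
            have : cols 0 < cols j := hcols (Fin.pos_of_ne_zero hj)
            omega
          rw [det_row0_single A hsingle]
          apply mul_nonneg (hpos _ _)
          exact ih n (by omega) _ _ (hrows.comp Fin.strictMono_succ)
            (hcols.comp Fin.strictMono_succ)
      · -- rows 0 = cols 0 : block case
        classical
        set P : ℕ → Prop := fun m => ∀ i : Fin (n+1), (i : ℕ) < m →
          rows i = rows 0 + i ∧ cols i = rows 0 + i with hPdef
        have hP1 : P 1 := by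
          intro i hi
          have : i = 0 := Fin.ext (by simp only [Fin.val_zero]; omega)
          subst this
          constructor <;> simp [heq]
        set m := Nat.findGreatest P (n+1) with hmdef
        have hm1 : 1 ≤ m := Nat.le_findGreatest (by omega) hP1
        have hmle : m ≤ n + 1 := Nat.findGreatest_le _
        have hPm : P m := Nat.findGreatest_spec (show 1 ≤ n+1 by omega) hP1
        by_cases hmeq : m = n + 1
        · have hAeq : A = Matrix.of (fun i j : Fin (n+1) => M (rows 0 + i) (rows 0 + j)) := by
            ext i j
            rw [hA, (hPm i (by omega)).1, (hPm j (by omega)).2]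
            rfl
          rw [hAeq]
          exact hmin (rows 0) (n+1)
        · have hmlt : m < n + 1 := by omega
          set im : Fin (n+1) := ⟨m, hmlt⟩ with himdef
          have hnotP : ¬ P (m+1) := Nat.findGreatest_is_greatest (Nat.lt_succ_self m) (by omega)
          have hbreak : ¬ (rows im = rows 0 + m ∧ cols im = rows 0 + m) := by
            intro hcon
            apply hnotP
            intro i hi
            rcases Nat.lt_or_ge (i : ℕ) m with h | h
            · exact hPm i h
            · have : i = im := Fin.ext (show (i:ℕ) = m by omega)
              rw [this]
              simpa using hcon
          have hrow_ge : rows 0 + m ≤ rows im :=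
            strictMono_fin_le rows hrows m 0 im (show (m:ℕ) = ↑(0 : Fin (n+1)) + m by simp)
          have hcol_ge : cols 0 + m ≤ cols im :=
            strictMono_fin_le cols hcols m 0 im (show (m:ℕ) = ↑(0 : Fin (n+1)) + m by simp)
          have hsplit : rows 0 + m + 1 ≤ rows im ∨ rows 0 + m + 1 ≤ cols im := by
            by_contra hcc
            push_neg at hcc
            exact hbreak ⟨by omega, by omega⟩
          have hkm : m + (n + 1 - m) = n + 1 := by omega
          set e : Fin m ⊕ Fin (n+1-m) ≃ Fin (n+1) :=
            finSumFinEquiv.trans (finCongr hkm) with hedef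
          have he_l : ∀ i : Fin m, ((e (Sum.inl i)) : ℕ) = (i : ℕ) := by
            intro i; simp [hedef]
          have he_r : ∀ j : Fin (n+1-m), ((e (Sum.inr j)) : ℕ) = m + (j : ℕ) := by
            intro j; simp [hedef]
          rw [← Matrix.det_submatrix_equiv_self e A,
            ← Matrix.fromBlocks_toBlocks (A.submatrix e e)]
          have h11nn : (0:ℝ) ≤ (A.submatrix e e).toBlocks₁₁.det := by
            have h11 : (A.submatrix e e).toBlocks₁₁
                = Matrix.of (fun i j : Fin m => M (rows 0 + i) (rows 0 + j)) := by
              ext i j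
              show A (e (Sum.inl i)) (e (Sum.inl j)) = _
              rw [hA, (hPm _ (by rw [he_l]; exact i.isLt)).1,
                (hPm _ (by rw [he_l]; exact j.isLt)).2, he_l, he_l]
              rfl
            rw [h11]
            exact hmin (rows 0) m
          have h22nn : (0:ℝ) ≤ (A.submatrix e e).toBlocks₂₂.det := by
            have hs1 : StrictMono (fun i : Fin (n+1-m) => rows (e (Sum.inr i))) := by
              intro i j hij
              apply hrows
              rw [Fin.lt_def, he_r, he_r]
              have : (i : ℕ) < (j : ℕ) := hij
              omega
            have hs2 : StrictMono (fun i : Fin (n+1-m) => cols (e (Sum.inr i))) := by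
              intro i j hij
              apply hcols
              rw [Fin.lt_def, he_r, he_r]
              have : (i : ℕ) < (j : ℕ) := hij
              omega
            exact ih (n+1-m) (by omega) _ _ hs1 hs2
          rcases hsplit with hR | hC
          · have h21 : (A.submatrix e e).toBlocks₂₁ = 0 := by
              ext i j
              show A (e (Sum.inr i)) (e (Sum.inl j)) = 0
              rw [hA]
              apply hz2
              have hcj : cols (e (Sum.inl j)) = rows 0 + ((e (Sum.inl j)) : ℕ) :=
                (hPm _ (by rw [he_l]; exact j.isLt)).2
              have hri : rows im ≤ rows (e (Sum.inr i)) :=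
                hrows.monotone (show im ≤ e (Sum.inr i) by rw [Fin.le_def, he_r]; show m ≤ m + (i:ℕ); omega)
              have hjlt : (j : ℕ) < m := j.isLt
              rw [hcj, he_l]
              omega
            rw [h21, Matrix.det_fromBlocks_zero₂₁]
            exact mul_nonneg h11nn h22nn
          · have h12 : (A.submatrix e e).toBlocks₁₂ = 0 := by
              ext i j
              show A (e (Sum.inl i)) (e (Sum.inr j)) = 0
              rw [hA]
              apply hz1
              have hriq : rows (e (Sum.inl i)) = rows 0 + ((e (Sum.inl i)) : ℕ) :=
                (hPm _ (by rw [he_l]; exact i.isLt)).1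
              have hcj : cols im ≤ cols (e (Sum.inr j)) :=
                hcols.monotone (show im ≤ e (Sum.inr j) by rw [Fin.le_def, he_r]; show m ≤ m + (j:ℕ); omega)
              have hilt : (i : ℕ) < m := i.isLt
              rw [hriq, he_l]
              omega
            rw [h12, Matrix.det_fromBlocks_zero₁₂]
            exact mul_nonneg h11nn h22nn
      · -- cols 0 < rows 0
        rcases Nat.lt_or_ge (cols 0 + 1) (rows 0) with h2 | h2
        · have hz : A.det = 0 := Matrix.det_eq_zero_of_column_eq_zero 0 (fun i => by
            rw [hA]
            exact hz2 _ _ (le_trans (by omega) (hrows.monotone (Fin.zero_le i))))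
          rw [hz]
        · have hsingle : ∀ i, i ≠ 0 → A i 0 = 0 := by
            intro i hi
            rw [hA]
            apply hz2
            have : rows 0 < rows i := hrows (Fin.pos_of_ne_zero hi)
            omega
          rw [det_col0_single A hsingle]
          apply mul_nonneg (hpos _ _)
          exact ih n (by omega) _ _ (hrows.comp Fin.strictMono_succ)
            (hcols.comp Fin.strictMono_succ)


set_option maxHeartbeats 1000000 in
theorem jacobi_TP_iff (a b r s t : ℝ) (ha : 0 ≤ a) (hb : 0 ≤ b) (hr : 0 ≤ r)
    (hs : 0 ≤ s) (ht : 0 ≤ t) :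
    IsTP (jacobiMatrix a b r s t) ↔
      s ^ 2 ≥ 4 * r * t ∧ a * (s + Real.sqrt (s ^ 2 - 4 * r * t)) / 2 ≥ b * r := by
  constructor
  · intro hTP
    have hD : ∀ k, 0 ≤ Dseq r s t k := by
      intro k
      have hmono : StrictMono (fun i : Fin k => 1 + (i : ℕ)) := by
        intro i j hij
        exact Nat.add_lt_add_left hij 1
      have h := hTP k _ _ hmono hmono
      have e := detA k 1 le_rfl
        (Matrix.of fun i j : Fin k => jacobiMatrix a b r s t (1 + (i:ℕ)) (1 + (j:ℕ)))
        (fun i j => rfl)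
      rw [← e]
      exact h
    have hE : ∀ k, 0 ≤ Eseq a b r s t k := by
      intro k
      have hmono : StrictMono (fun i : Fin k => (i : ℕ)) := fun i j hij => hij
      have h := hTP k _ _ hmono hmono
      have e := detB k
        (Matrix.of fun i j : Fin k => jacobiMatrix a b r s t (i:ℕ) (j:ℕ))
        (fun i j => rfl)
      rw [← e]
      exact h
    have h1 : s ^ 2 ≥ 4 * r * t := by
      by_contra hlt
      push_neg at hlt
      have hrt : 0 < r * t := by nlinarith [sq_nonneg s]
      have hs0 : 0 < s := by
        rcases hs.lt_or_eq with h | h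
        · exact h
        · exfalso
          have h2 := hD 2
          have he : Dseq r s t 2 = s * s - r * t * 1 := rfl
          rw [he, ← h] at h2
          nlinarith
      have hDpos : ∀ k, 0 < Dseq r s t k := by
        intro k
        induction k using Nat.strong_induction_on with
        | _ k ihp =>
          match k with
          | 0 => norm_num [Dseq]
          | 1 => simpa [Dseq] using hs0
          | (k+2) =>
            rcases (hD (k+2)).lt_or_eq with h | h
            · exact h
            · exfalso
              have h3 := hD (k+3)
              have he : Dseq r s t (k+3)
                  = s * Dseq r s t (k+2) - r * t * Dseq r s t (k+1) := rfl
              have hk1 : 0 < Dseq r s t (k+1) := ihp (k+1) (by omega)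
              rw [he, ← h] at h3
              nlinarith
      have hsq : Real.sqrt (r * t) ^ 2 = r * t := Real.sq_sqrt hrt.le
      have hδ : 0 < 2 * Real.sqrt (r * t) - s := by
        nlinarith [Real.sqrt_nonneg (r * t)]
      set δ := 2 * Real.sqrt (r * t) - s with hδdef
      set x : ℕ → ℝ := fun k => Dseq r s t (k+1) / Dseq r s t k with hxdef
      have hxpos : ∀ k, 0 < x k := fun k => div_pos (hDpos (k+1)) (hDpos k)
      have hstep : ∀ k, x (k+1) ≤ x k - δ := by
        intro k
        have hk := hDpos k
        have hk1 := hDpos (k+1)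
        have hineq : 2 * Real.sqrt (r * t) ≤ x k + r * t / x k := by
          nlinarith [sq_nonneg (x k - Real.sqrt (r * t)),
            div_mul_cancel₀ (r * t) (ne_of_gt (hxpos k)), hxpos k]
        have hxk1 : x (k+1) = s - r * t / x k := by
          show Dseq r s t (k+2) / Dseq r s t (k+1) = _
          have hrec : Dseq r s t (k+2)
              = s * Dseq r s t (k+1) - r * t * Dseq r s t k := rfl
          rw [hrec, hxdef]
          field_simp
          try ring
        rw [hxk1]
        linarith
      have hlb : ∀ k : ℕ, x k ≤ x 0 - k * δ := by
        intro k
        induction k with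
        | zero => simp
        | succ k ihk =>
          have := hstep k
          push_cast
          push_cast at ihk
          linarith
      obtain ⟨N, hN⟩ := exists_nat_gt (x 0 / δ)
      have h5 : x 0 < (N : ℝ) * δ := by
        rw [div_lt_iff₀ hδ] at hN
        linarith
      linarith [hxpos N, hlb N]
    refine ⟨h1, ?_⟩
    obtain ⟨hsum, hprod, hm, hmL⟩ := lam_mu r s t hr ht hs h1
    set L := (s + Real.sqrt (s ^ 2 - 4 * r * t)) / 2 with hLdef
    set mu := (s - Real.sqrt (s ^ 2 - 4 * r * t)) / 2 with hmudef
    have hgoal : a * (s + Real.sqrt (s ^ 2 - 4 * r * t)) / 2 = a * L := by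
      rw [hLdef]; ring
    rw [ge_iff_le, hgoal]
    by_contra hc
    push_neg at hc
    have hL0 : 0 ≤ L := hm.trans hmL
    have hεpos : 0 < b * r - a * L := by linarith
    have hkey : ∀ k, (b * r - a * L) * Dseq r s t k ≤ a * mu ^ (k+1) := by
      intro k
      have hEk := hE (k+2)
      have he : Eseq a b r s t (k+2)
          = a * Dseq r s t (k+1) - b * r * Dseq r s t k := rfl
      rw [he, Dseq_step hsum hprod k] at hEk
      nlinarith
    have hD0 : (b * r - a * L) ≤ a * mu := by
      have := hkey 0
      have he : Dseq r s t 0 = 1 := rfl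
      rw [he] at this
      simpa using this
    have hamu : 0 < a * mu := lt_of_lt_of_le hεpos hD0
    have hmu : 0 < mu := by nlinarith
    have hL' : 0 < L := lt_of_lt_of_le hmu hmL
    rcases hmL.lt_or_eq with hltm | heqm
    · have hq1 : mu / L < 1 := (div_lt_one hL').mpr hltm
      obtain ⟨N, hN⟩ := exists_pow_lt_of_lt_one (div_pos hεpos hamu) hq1
      have h2' := hkey N
      have hDgeL := Dseq_ge_pow hsum hprod hm hL0 N
      have hLp : 0 < L ^ N := pow_pos hL' N
      have c1 : (b * r - a * L) * L ^ N ≤ a * mu * mu ^ N := by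
        have : a * mu ^ (N+1) = a * mu * mu ^ N := by ring
        nlinarith
      have c2 : mu ^ N * (a * mu) < (b * r - a * L) * L ^ N := by
        have hN' : mu ^ N / L ^ N < (b * r - a * L) / (a * mu) := by
          rw [← div_pow]; exact hN
        exact (div_lt_div_iff₀ hLp hamu).mp hN'
      nlinarith
    · have hsum' : L + L = s := by rw [heqm] at hsum; exact hsum
      have hprod' : L * L = r * t := by rw [heqm] at hprod; exact hprod
      obtain ⟨N, hN⟩ := exists_nat_gt (a * L / (b * r - a * L))
      have h2' := hkey N
      rw [Dseq_eq_of_eq hsum' hprod' N] at h2'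
      have hLp : 0 < L ^ N := pow_pos hL' N
      have h3 : (b * r - a * L) * ((N : ℝ) + 1) ≤ a * L := by
        have h4 : (b * r - a * L) * (((N : ℝ) + 1)) * L ^ N ≤ (a * L) * L ^ N := by
          have : a * mu ^ (N+1) = (a * L) * L ^ N := by rw [heqm]; ring
          nlinarith
        exact le_of_mul_le_mul_right h4 hLp
      have h5 : a * L < (N : ℝ) * (b * r - a * L) := by
        rw [div_lt_iff₀ hεpos] at hN
        linarith
      nlinarith
  · rintro ⟨h1, h2⟩
    obtain ⟨hsum, hprod, hm, hmL⟩ := lam_mu r s t hr ht hs h1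
    set L := (s + Real.sqrt (s ^ 2 - 4 * r * t)) / 2 with hLdef
    set mu := (s - Real.sqrt (s ^ 2 - 4 * r * t)) / 2 with hmudef
    have hL0 : 0 ≤ L := hm.trans hmL
    have hbr : b * r ≤ a * L := by
      have : a * L = a * (s + Real.sqrt (s ^ 2 - 4 * r * t)) / 2 := by
        rw [hLdef]; ring
      linarith
    refine tridiag_TP (jacobiMatrix a b r s t)
      (fun i j h => jm_zero_right h) (fun i j h => jm_zero_left h)
      (jm_nonneg ha hb hr hs ht) ?_
    intro p k
    match p with
    | 0 =>
      have e := detB (a:=a) (b:=b) (r:=r) (s:=s) (t:=t) k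
        (Matrix.of fun i j : Fin k => jacobiMatrix a b r s t (0 + (i:ℕ)) (0 + (j:ℕ)))
        (fun i j => by simp)
      rw [e]
      match k with
      | 0 => norm_num [Eseq]
      | 1 => simpa [Eseq] using ha
      | (k+2) =>
        show 0 ≤ a * Dseq r s t (k+1) - b * r * Dseq r s t k
        have hst := Dseq_succ_ge hsum hprod hm hL0 k
        have hDk := Dseq_nonneg hsum hprod hm hL0 k
        nlinarith
    | (p+1) =>
      have e := detA k (p+1) (by omega)
        (Matrix.of fun i j : Fin k => jacobiMatrix a b r s t (p+1 + (i:ℕ)) (p+1 + (j:ℕ)))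
        (fun i j => rfl)
      rw [e]
      exact Dseq_nonneg hsum hprod hm hL0 k
end

section
/- Let R be a consistent Riordan array, i.e., the Riordan array determined by a nonnegative A-sequence (a_n) and Z-sequence (z_n) with z_n = a_n for all n. If (a_n) is a Pólya frequency (PF) sequence, then R is totally positive (TP). -/
/-- The Toeplitz matrix `[a_{i-j}]` of a sequence `a` (with `a m = 0` for `m < 0`). -/
def toeplitz (a : ℕ → ℝ) : ℕ → ℕ → ℝ := fun i j => if j ≤ i then a (i - j) else 0

/-- A nonnegative sequence is a Pólya frequency (PF) sequence
if its Toeplitz matrix is TP. -/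
def IsPF (a : ℕ → ℝ) : Prop := IsTP (toeplitz a)

open Matrix Finset Equiv Equiv.Perm in
/-- Cauchy–Binet formula for rectangular real matrices. -/
theorem myCauchyBinet {k m : ℕ} (A : Matrix (Fin k) (Fin m) ℝ) (B : Matrix (Fin m) (Fin k) ℝ) :
    (A * B).det = ∑ f ∈ Finset.univ.filter (fun f : Fin k → Fin m => StrictMono f),
      (A.submatrix id f).det * (B.submatrix f id).det := by
  have hcomp : ∀ p : Fin k → Fin m, (p ∘ Tuple.sort p) ∘ ⇑(Tuple.sort p)⁻¹ = p := by
    intro p; ext i; simp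
  have inner : ∀ p : Fin k → Fin m,
      (∑ σ : Perm (Fin k), Equiv.Perm.sign σ • ∏ i, A (σ i) (p i) * B (p i) i)
        = (∏ i, B (p i) i) * (A.submatrix id p).det := by
    intro p
    rw [det_apply', Finset.mul_sum]
    refine Finset.sum_congr rfl fun σ _ => ?_
    rw [Finset.prod_mul_distrib]
    simp only [Matrix.submatrix_apply, id_eq, Units.smul_def, zsmul_eq_mul]
    ring
  have step1 : (A * B).det
      = ∑ p : Fin k → Fin m, (∏ i, B (p i) i) * (A.submatrix id p).det := by
    calc (A * B).det = ∑ σ : Perm (Fin k), Equiv.Perm.sign σ • ∏ i, ∑ j, A (σ i) j * B j i := by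
          rw [det_apply]
          exact Finset.sum_congr rfl fun σ _ => by simp only [Matrix.mul_apply]
      _ = ∑ σ : Perm (Fin k), ∑ p : Fin k → Fin m,
            Equiv.Perm.sign σ • ∏ i, A (σ i) (p i) * B (p i) i := by
          simp only [Finset.prod_univ_sum, Fintype.piFinset_univ, smul_sum]
      _ = ∑ p : Fin k → Fin m, ∑ σ : Perm (Fin k),
            Equiv.Perm.sign σ • ∏ i, A (σ i) (p i) * B (p i) i := Finset.sum_comm
      _ = _ := Finset.sum_congr rfl fun p _ => inner p
  have step2 : (A * B).det
      = ∑ p ∈ Finset.univ.filter (fun p : Fin k → Fin m => Function.Injective p),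
          (∏ i, B (p i) i) * (A.submatrix id p).det := by
    rw [step1]
    refine (Finset.sum_subset (Finset.filter_subset _ _) fun p _ hp => ?_).symm
    simp only [Finset.mem_filter, Finset.mem_univ, true_and] at hp
    have : (A.submatrix id p).det = 0 := by
      rw [Function.not_injective_iff] at hp
      obtain ⟨i, j, hij, hne⟩ := hp
      exact Matrix.det_zero_of_column_eq hne (fun r => by simp [Matrix.submatrix_apply, hij])
    rw [this, mul_zero]
  have step3 : (∑ p ∈ Finset.univ.filter (fun p : Fin k → Fin m => Function.Injective p),
          (∏ i, B (p i) i) * (A.submatrix id p).det)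
      = ∑ q ∈ (Finset.univ.filter (fun f : Fin k → Fin m => StrictMono f)) ×ˢ
          (Finset.univ : Finset (Perm (Fin k))),
          (∏ i, B ((q.1 ∘ q.2) i) i) * (A.submatrix id (q.1 ∘ q.2)).det := by
    refine Finset.sum_nbij' (fun p => (p ∘ Tuple.sort p, (Tuple.sort p)⁻¹))
      (fun q => q.1 ∘ q.2) ?_ ?_ ?_ ?_ ?_
    · intro p hp
      simp only [Finset.mem_filter, Finset.mem_univ, true_and] at hp
      simp only [Finset.mem_product, Finset.mem_filter, Finset.mem_univ, true_and, and_true]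
      exact (Tuple.monotone_sort p).strictMono_of_injective
        (hp.comp (Tuple.sort p).injective)
    · intro q hq
      simp only [Finset.mem_product, Finset.mem_filter, Finset.mem_univ, true_and, and_true] at hq
      simp only [Finset.mem_filter, Finset.mem_univ, true_and]
      exact hq.injective.comp q.2.injective
    · intro p _
      exact hcomp p
    · intro q hq
      simp only [Finset.mem_product, Finset.mem_filter, Finset.mem_univ, true_and, and_true] at hq
      obtain ⟨f, σ⟩ := q
      have hmono : f ∘ Tuple.sort f = f := by
        rw [Tuple.sort_eq_refl_iff_monotone.mpr hq.monotone]; rfl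
      have h1 : (f ∘ σ) ∘ Tuple.sort (f ∘ σ) = f := by
        rw [Tuple.comp_perm_comp_sort_eq_comp_sort, hmono]
      have h2 : Tuple.sort (f ∘ σ) = σ⁻¹ := by
        ext x
        have h3 := hq.injective (congrFun h1 x)
        have : (Tuple.sort (f ∘ σ)) x = σ⁻¹ x := by
          have := congrArg (⇑σ⁻¹) h3
          simpa using this
        exact congrArg Fin.val this
      have h4 : (f ∘ ⇑σ) ∘ ⇑σ⁻¹ = f := by ext x; simp
      simp only [h1, h2, inv_inv, h4]
    · intro p _
      rw [hcomp p]
  rw [step2, step3, Finset.sum_product]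
  refine Finset.sum_congr rfl fun f hf => ?_
  simp only [Finset.mem_filter, Finset.mem_univ, true_and] at hf
  have key : ∀ σ : Perm (Fin k),
      (∏ i, B ((f ∘ σ) i) i) * (A.submatrix id (f ∘ σ)).det
        = Equiv.Perm.sign σ • (∏ i, (B.submatrix f id) (σ i) i) * (A.submatrix id f).det := by
    intro σ
    have : A.submatrix id (f ∘ σ) = (A.submatrix id f).submatrix id σ := rfl
    rw [this, Matrix.det_permute']
    simp only [Matrix.submatrix_apply, id_eq, Function.comp_apply, Units.smul_def, zsmul_eq_mul]
    ring
  rw [Finset.sum_congr rfl fun σ _ => key σ]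
  rw [← Finset.sum_mul, mul_comm]
  congr 1
  rw [det_apply']
  refine Finset.sum_congr rfl fun σ _ => ?_
  simp [Units.smul_def, zsmul_eq_mul]

/-- The production matrix of a consistent Riordan array with `A`-sequence `a`. -/
def Jmat (a : ℕ → ℝ) : ℕ → ℕ → ℝ := fun n k => toeplitz a (n + 1) (max k 1)

lemma Jmat_TP (a : ℕ → ℝ) (hPF : IsPF a) : IsTP (Jmat a) := by
  intro k rows cols hr hc
  by_cases hinj : Function.Injective (fun i => max (cols i) 1)
  · have hmono : Monotone (fun i => max (cols i) 1) :=
      fun i j h => max_le_max (hc.monotone h) le_rfl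
    have hsm : StrictMono (fun i => max (cols i) 1) := hmono.strictMono_of_injective hinj
    exact hPF k (fun i => rows i + 1) (fun i => max (cols i) 1)
      (fun i j h => Nat.add_lt_add_right (hr h) 1) hsm
  · rw [Function.not_injective_iff] at hinj
    obtain ⟨i, j, hij, hne⟩ := hinj
    have hz : (Matrix.of fun i j => Jmat a (rows i) (cols j)).det = 0 := by
      refine Matrix.det_zero_of_column_eq hne fun r => ?_
      show Jmat a (rows r) (cols i) = Jmat a (rows r) (cols j)
      unfold Jmat
      rw [hij]
    rw [hz]

theorem consistent_riordan_TP_of_PF (a z : ℕ → ℝ) (ha : ∀ n, 0 ≤ a n) (hz : ∀ n, 0 ≤ z n)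
    (hcons : ∀ n, z n = a n)
    (R : ℕ → ℕ → ℝ)
    (hR00 : R 0 0 = 1)
    (htri : ∀ n k, n < k → R n k = 0)
    (hZ : ∀ n, R (n + 1) 0 = ∑ j ∈ Finset.range (n + 1), z j * R n j)
    (hA : ∀ n k, R (n + 1) (k + 1) = ∑ j ∈ Finset.range (n + 1), a j * R n (k + j))
    (hPF : IsPF a) :
    IsTP R := by
  have hJ0 : ∀ j : ℕ, Jmat a j 0 = a j := by
    intro j
    simp [Jmat, toeplitz]
  have hJs : ∀ j m : ℕ, Jmat a j (m + 1) = if m ≤ j then a (j - m) else 0 := by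
    intro j m
    have h1 : max (m + 1) 1 = m + 1 := by omega
    simp [Jmat, toeplitz, h1, Nat.succ_sub_succ, Nat.succ_le_succ_iff]
  -- the key recurrence, with an arbitrarily long truncation of the sum
  have key : ∀ n N kk : ℕ, n ≤ N →
      R (n + 1) kk = ∑ j ∈ Finset.range (N + 2), R n j * Jmat a j kk := by
    intro n N kk hn
    cases kk with
    | zero =>
      have htr : ∑ j ∈ Finset.range (N + 2), R n j * Jmat a j 0
          = ∑ j ∈ Finset.range (n + 1), R n j * Jmat a j 0 := by
        refine (Finset.sum_subset (Finset.range_subset_range.mpr (by omega)) fun j hj hj' => ?_).symm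
        rw [Finset.mem_range] at hj'
        rw [htri n j (by omega), zero_mul]
      rw [htr, hZ n]
      refine Finset.sum_congr rfl fun j _ => ?_
      rw [hcons, hJ0, mul_comm]
    | succ m =>
      rw [hA n m]
      by_cases hm : m ≤ N + 1
      · have hsplit : ∑ j ∈ Finset.range (N + 2), R n j * Jmat a j (m + 1)
            = ∑ i ∈ Finset.range (N + 2 - m), a i * R n (m + i) := by
          rw [Finset.range_eq_Ico,
            ← Finset.sum_Ico_consecutive _ (Nat.zero_le m) (by omega : m ≤ N + 2)]
          have h1 : ∑ j ∈ Finset.Ico 0 m, R n j * Jmat a j (m + 1) = 0 := by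
            refine Finset.sum_eq_zero fun j hj => ?_
            rw [Finset.mem_Ico] at hj
            rw [hJs, if_neg (by omega), mul_zero]
          rw [h1, zero_add, Finset.sum_Ico_eq_sum_range]
          refine Finset.sum_congr rfl fun i hi => ?_
          rw [hJs, if_pos (by omega)]
          have h2 : m + i - m = i := by omega
          rw [h2, mul_comm]
        rw [hsplit]
        have e1 : ∑ i ∈ Finset.range (n + 1), a i * R n (m + i)
            = ∑ i ∈ Finset.range (n + N + 2), a i * R n (m + i) := by
          refine Finset.sum_subset (Finset.range_subset_range.mpr (by omega)) fun i hi hi' => ?_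
          rw [Finset.mem_range] at hi'
          rw [htri n (m + i) (by omega), mul_zero]
        have e2 : ∑ i ∈ Finset.range (N + 2 - m), a i * R n (m + i)
            = ∑ i ∈ Finset.range (n + N + 2), a i * R n (m + i) := by
          refine Finset.sum_subset (Finset.range_subset_range.mpr (by omega)) fun i hi hi' => ?_
          rw [Finset.mem_range] at hi'
          rw [htri n (m + i) (by omega), mul_zero]
        rw [e1, ← e2]
      · have hL : ∀ i ∈ Finset.range (n + 1), a i * R n (m + i) = 0 := fun i hi => by
          rw [htri n (m + i) (by omega), mul_zero]
        have hRt : ∀ j ∈ Finset.range (N + 2), R n j * Jmat a j (m + 1) = 0 := fun j hj => by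
          rw [Finset.mem_range] at hj
          rw [hJs, if_neg (by omega), mul_zero]
        rw [Finset.sum_eq_zero hL, Finset.sum_eq_zero hRt]
  -- the Cauchy–Binet induction step
  have CBstep : ∀ N : ℕ,
      (∀ k (rows cols : Fin k → ℕ), StrictMono rows → StrictMono cols →
        (∀ i, rows i ≤ N) → 0 ≤ (Matrix.of fun i j => R (rows i) (cols j)).det) →
      ∀ k (rows cols : Fin k → ℕ), StrictMono rows → StrictMono cols →
        (∀ i, 1 ≤ rows i) → (∀ i, rows i ≤ N + 1) →
        0 ≤ (Matrix.of fun i j => R (rows i) (cols j)).det := by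
    intro N ih k rows cols hr hc h1 hN
    set A : Matrix (Fin k) (Fin (N + 2)) ℝ :=
      Matrix.of fun i j => R (rows i - 1) (j : ℕ) with hAdef
    set B : Matrix (Fin (N + 2)) (Fin k) ℝ :=
      Matrix.of fun j l => Jmat a (j : ℕ) (cols l) with hBdef
    have hM : (Matrix.of fun i l => R (rows i) (cols l) : Matrix (Fin k) (Fin k) ℝ) = A * B := by
      ext i l
      have hi1 := h1 i
      have hiN := hN i
      rw [Matrix.mul_apply]
      show R (rows i) (cols l) = _
      have hpred : rows i - 1 + 1 = rows i := by omega
      calc R (rows i) (cols l) = R ((rows i - 1) + 1) (cols l) := by rw [hpred]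
        _ = ∑ t ∈ Finset.range (N + 2), R (rows i - 1) t * Jmat a t (cols l) :=
            key _ _ _ (by omega)
        _ = ∑ j : Fin (N + 2), R (rows i - 1) (j : ℕ) * Jmat a (j : ℕ) (cols l) :=
            (Fin.sum_univ_eq_sum_range _ _).symm
    rw [hM, myCauchyBinet]
    refine Finset.sum_nonneg fun f hf => ?_
    rw [Finset.mem_filter] at hf
    have hfm : StrictMono f := hf.2
    refine mul_nonneg ?_ ?_
    · exact ih k (fun i => rows i - 1) (fun j => (f j : ℕ))
        (fun i j hij => by
          have h := hr hij
          have hqi := h1 i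
          have hqj := h1 j
          show rows i - 1 < rows j - 1
          omega)
        (fun i j hij => hfm hij)
        (fun i => by have := hN i; show rows i - 1 ≤ N; omega)
    · exact Jmat_TP a hPF k (fun j => (f j : ℕ)) cols (fun i j hij => hfm hij) hc
  -- main induction on a bound for the row indices
  have main : ∀ N : ℕ, ∀ k (rows cols : Fin k → ℕ), StrictMono rows → StrictMono cols →
      (∀ i, rows i ≤ N) → 0 ≤ (Matrix.of fun i j => R (rows i) (cols j)).det := by
    intro N
    induction N with
    | zero =>
      intro k rows cols hr hc hb
      match k, rows, cols, hr, hc, hb with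
      | 0, rows, cols, hr, hc, hb =>
        simp [Matrix.det_fin_zero]
      | 1, rows, cols, hr, hc, hb =>
        rw [Matrix.det_fin_one]
        show 0 ≤ R (rows 0) (cols 0)
        have h0 : rows 0 = 0 := Nat.le_zero.mp (hb 0)
        rw [h0]
        rcases Nat.eq_zero_or_pos (cols 0) with h | h
        · rw [h, hR00]; norm_num
        · rw [htri 0 _ h]
      | (n + 2), rows, cols, hr, hc, hb =>
        have h01 : (0 : Fin (n + 2)) < 1 := by
          rw [Fin.lt_def]
          simp
        have hlt : rows 0 < rows 1 := hr h01
        have hle : rows 1 = 0 := Nat.le_zero.mp (hb 1)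
        omega
    | succ N ih =>
      intro k rows cols hr hc hb
      match k, rows, cols, hr, hc, hb with
      | 0, rows, cols, hr, hc, hb =>
        simp [Matrix.det_fin_zero]
      | (k + 1), rows, cols, hr, hc, hb =>
        by_cases h0 : rows 0 = 0
        · by_cases hc0 : cols 0 = 0
          · have hdet : (Matrix.of fun i j => R (rows i) (cols j)
                : Matrix (Fin (k + 1)) (Fin (k + 1)) ℝ).det
                = ((Matrix.of fun i j => R (rows i) (cols j)).submatrix
                    Fin.succ Fin.succ).det := by
              rw [Matrix.det_succ_row_zero, Finset.sum_eq_single 0]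
              · rw [Fin.succAbove_zero]
                simp [h0, hc0, hR00]
              · intro j _ hj
                have hcj : 0 < cols j := by
                  have := hc (Fin.pos_of_ne_zero hj)
                  omega
                have hzero : R (rows 0) (cols j) = 0 := by
                  rw [h0]; exact htri 0 _ hcj
                simp [hzero]
              · intro h; exact absurd (Finset.mem_univ _) h
            rw [hdet]
            exact CBstep N ih k (rows ∘ Fin.succ) (cols ∘ Fin.succ)
              (hr.comp Fin.strictMono_succ) (hc.comp Fin.strictMono_succ)
              (fun i => by have := hr (Fin.succ_pos i); show 1 ≤ rows i.succ; omega)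
              (fun i => hb _)
          · have hzrow : (Matrix.of fun i j => R (rows i) (cols j)
                : Matrix (Fin (k + 1)) (Fin (k + 1)) ℝ).det = 0 := by
              refine Matrix.det_eq_zero_of_row_eq_zero 0 fun j => ?_
              show R (rows 0) (cols j) = 0
              rw [h0]
              refine htri 0 _ ?_
              have := hc.monotone (Fin.zero_le j)
              omega
            rw [hzrow]
        · exact CBstep N ih (k + 1) rows cols hr hc
            (fun i => by have := hr.monotone (Fin.zero_le i); omega) hb
  intro k rows cols hr hc
  exact main (Finset.univ.sup rows) k rows cols hr hc
    (fun i => Finset.le_sup (Finset.mem_univ i))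
end

section
/- Let R = [r_{n,k}] be a consistent Riordan array (Z-sequence equal to the A-sequence) whose A-sequence (a_n) is a nonnegative log-concave sequence. Then the 0th column (r_{n,0})_{n≥0} of R is log-convex. -/
/-- Entry of the production matrix of a consistent Riordan array. -/
def Jaux (a : ℕ → ℝ) (m c : ℕ) : ℝ := if c - 1 ≤ m then a (m - (c - 1)) else 0

lemma Jaux_nonneg (a : ℕ → ℝ) (ha : ∀ n, 0 ≤ a n) (m c : ℕ) : 0 ≤ Jaux a m c := by
  unfold Jaux; split <;> [exact ha _; exact le_refl 0]

lemma sym_sum_nonneg (s : Finset ℕ) (f : ℕ → ℕ → ℝ)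
    (h : ∀ m m', 0 ≤ f m m' + f m' m) :
    0 ≤ ∑ m ∈ s, ∑ m' ∈ s, f m m' := by
  have key : ∑ m ∈ s, ∑ m' ∈ s, f m' m = ∑ m ∈ s, ∑ m' ∈ s, f m m' := Finset.sum_comm
  have pos : 0 ≤ ∑ m ∈ s, ∑ m' ∈ s, (f m m' + f m' m) :=
    Finset.sum_nonneg fun m _ => Finset.sum_nonneg fun m' _ => h m m'
  have expand : ∑ m ∈ s, ∑ m' ∈ s, (f m m' + f m' m)
      = (∑ m ∈ s, ∑ m' ∈ s, f m m') + ∑ m ∈ s, ∑ m' ∈ s, f m' m := by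
    simp [Finset.sum_add_distrib]
  linarith

theorem consistent_riordan_col0_logConvex (a z : ℕ → ℝ) (ha : ∀ n, 0 ≤ a n) (hz : ∀ n, 0 ≤ z n)
    (hcons : ∀ n, z n = a n)
    (hlogconcave : ∀ i j : ℕ, i < j → a i * a (j + 1) ≤ a (i + 1) * a j)
    (R : ℕ → ℕ → ℝ)
    (hR00 : R 0 0 = 1)
    (htri : ∀ n k, n < k → R n k = 0)
    (hZ : ∀ n, R (n + 1) 0 = ∑ j ∈ Finset.range (n + 1), z j * R n j)
    (hA : ∀ n k, R (n + 1) (k + 1) = ∑ j ∈ Finset.range (n + 1), a j * R n (k + j)) :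
    ∀ i j : ℕ, i < j → R (i + 1) 0 * R j 0 ≤ R i 0 * R (j + 1) 0 := by
  -- extended log-concavity
  have gen : ∀ (t x y : ℕ), x + t ≤ y → a x * a (y + t) ≤ a (x + t) * a y := by
    intro t
    induction t with
    | zero => intro x y _; simp [mul_comm]
    | succ t ih =>
      intro x y hxy
      have h1 : a x * a (y + t + 1) ≤ a (x + 1) * a (y + t) :=
        hlogconcave x (y + t) (by omega)
      have h2 : a (x + 1) * a (y + t) ≤ a (x + 1 + t) * a y := ih (x + 1) y (by omega)
      calc a x * a (y + (t + 1)) = a x * a (y + t + 1) := by rw [show y + (t+1) = y + t + 1 by omega]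
        _ ≤ a (x + 1) * a (y + t) := h1
        _ ≤ a (x + 1 + t) * a y := h2
        _ = a (x + (t + 1)) * a y := by rw [show x + 1 + t = x + (t+1) by omega]
  -- TP2 of the production matrix
  have Jtp2 : ∀ m m' c c', m ≤ m' → c ≤ c' →
      Jaux a m c' * Jaux a m' c ≤ Jaux a m c * Jaux a m' c' := by
    intro m m' c c' hm hc
    by_cases h1 : c' - 1 ≤ m
    · have h2 : c - 1 ≤ m := by omega
      have h3 : c - 1 ≤ m' := by omega
      have h4 : c' - 1 ≤ m' := by omega
      simp only [Jaux, if_pos h1, if_pos h2, if_pos h3, if_pos h4]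
      set α := m - (c' - 1) with hα
      set d := (c' - 1) - (c - 1) with hd
      set e := m' - m with he
      have e1 : m - (c - 1) = α + d := by omega
      have e2 : m' - (c' - 1) = α + e := by omega
      have e3 : m' - (c - 1) = α + d + e := by omega
      rw [e1, e2, e3]
      rcases le_total d e with hde | hde
      · have := gen d α (α + e) (by omega)
        calc a α * a (α + d + e) = a α * a ((α + e) + d) := by rw [show α+d+e = (α+e)+d by omega]
          _ ≤ a (α + d) * a (α + e) := this
      · have := gen e α (α + d) (by omega)
        calc a α * a (α + d + e) = a α * a ((α + d) + e) := by rw [show α+d+e = (α+d)+e by omega]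
          _ ≤ a (α + e) * a (α + d) := this
          _ = a (α + d) * a (α + e) := by ring
    · have : Jaux a m c' = 0 := by simp [Jaux, h1]
      rw [this, zero_mul]
      exact mul_nonneg (Jaux_nonneg a ha m c) (Jaux_nonneg a ha m' c')
  -- nonnegativity of R
  have hRnn : ∀ n k, 0 ≤ R n k := by
    intro n
    induction n with
    | zero =>
      intro k
      cases k with
      | zero => rw [hR00]; norm_num
      | succ k => rw [htri 0 (k + 1) (by omega)]
    | succ n ih =>
      intro k
      cases k with
      | zero =>
        rw [hZ]
        exact Finset.sum_nonneg fun j _ => mul_nonneg (hz j) (ih j)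
      | succ k =>
        rw [hA]
        exact Finset.sum_nonneg fun j _ => mul_nonneg (ha j) (ih _)
  -- uniform recurrence
  have recur : ∀ n c, R (n + 1) c = ∑ s ∈ Finset.range (n + 1), a s * R n (c - 1 + s) := by
    intro n c
    cases c with
    | zero =>
      rw [hZ]
      apply Finset.sum_congr rfl
      intro s _
      rw [hcons]
      norm_num
    | succ c =>
      rw [hA]
      simp
  -- expansion via the production matrix
  have hexp : ∀ n c M, c - 1 + n + 1 ≤ M →
      R (n + 1) c = ∑ m ∈ Finset.range M, Jaux a m c * R n m := by
    intro n c M hcov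
    have hsub : Finset.Ico (c - 1) (c - 1 + (n + 1)) ⊆ Finset.range M := by
      intro m hm
      simp only [Finset.mem_Ico] at hm
      simp only [Finset.mem_range]
      omega
    calc R (n + 1) c = ∑ s ∈ Finset.range (n + 1), a s * R n (c - 1 + s) := recur n c
      _ = ∑ m ∈ Finset.Ico (c - 1) (c - 1 + (n + 1)), Jaux a m c * R n m := by
          rw [Finset.sum_Ico_eq_sum_range]
          rw [show c - 1 + (n + 1) - (c - 1) = n + 1 by omega]
          apply Finset.sum_congr rfl
          intro s _
          have : Jaux a (c - 1 + s) c = a s := by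
            simp [Jaux, Nat.le_add_right]
          rw [this]
      _ = ∑ m ∈ Finset.range M, Jaux a m c * R n m := by
          apply Finset.sum_subset hsub
          intro m hm hm'
          simp only [Finset.mem_Ico, not_and, not_lt] at hm'
          by_cases h1 : c - 1 ≤ m
          · rw [htri n m (by have := hm' h1; omega), mul_zero]
          · simp [Jaux, h1]
  -- the TP2 property of rows of R
  have main : ∀ j, ∀ i, i < j → ∀ k l, k ≤ l → R i l * R j k ≤ R i k * R j l := by
    intro j
    induction j using Nat.strong_induction_on with
    | _ j IH =>
      intro i hij k l hkl
      cases i with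
      | zero =>
        cases k with
        | zero =>
          cases l with
          | zero => exact le_refl _
          | succ l =>
            rw [htri 0 (l + 1) (by omega), hR00, zero_mul, one_mul]
            exact hRnn j (l + 1)
        | succ k =>
          rw [htri 0 (k + 1) (by omega), htri 0 l (by omega), zero_mul, zero_mul]
      | succ i' =>
        cases j with
        | zero => omega
        | succ j' =>
          have hii' : i' < j' := by omega
          set M := (k - 1) + (l - 1) + j' + 1 with hM
          rw [hexp i' k M (by omega), hexp i' l M (by omega),
            hexp j' k M (by omega), hexp j' l M (by omega)]
          rw [Finset.sum_mul_sum, Finset.sum_mul_sum, ← sub_nonneg]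
          simp only [← Finset.sum_sub_distrib]
          apply sym_sum_nonneg
          intro m m'
          have key : (Jaux a m k * R i' m * (Jaux a m' l * R j' m') -
                Jaux a m l * R i' m * (Jaux a m' k * R j' m')) +
              (Jaux a m' k * R i' m' * (Jaux a m l * R j' m) -
                Jaux a m' l * R i' m' * (Jaux a m k * R j' m))
              = (R i' m * R j' m' - R i' m' * R j' m) *
                (Jaux a m k * Jaux a m' l - Jaux a m l * Jaux a m' k) := by ring
      -- goal is 0 ≤ that sum; handle both orders of m, m'
          rw [key]
          rcases le_total m m' with hmm | hmm
          · have hP : 0 ≤ R i' m * R j' m' - R i' m' * R j' m := by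
              have := IH j' (by omega) i' hii' m m' hmm
              linarith
            have hQ : 0 ≤ Jaux a m k * Jaux a m' l - Jaux a m l * Jaux a m' k := by
              have := Jtp2 m m' k l hmm hkl
              linarith
            exact mul_nonneg hP hQ
          · have hP : R i' m * R j' m' - R i' m' * R j' m ≤ 0 := by
              have := IH j' (by omega) i' hii' m' m hmm
              linarith
            have hQ : Jaux a m k * Jaux a m' l - Jaux a m l * Jaux a m' k ≤ 0 := by
              have := Jtp2 m' m k l hmm hkl
              linarith
            rw [← neg_mul_neg]
            exact mul_nonneg (by linarith) (by linarith)
  -- conclude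
  have ext : ∀ n N, n < N → R (n + 1) 0 = ∑ s ∈ Finset.range N, a s * R n s := by
    intro n N hn
    rw [recur n 0]
    have h0 : ∀ s : ℕ, (0 : ℕ) - 1 + s = s := fun s => by omega
    simp only [h0]
    apply Finset.sum_subset (Finset.range_subset_range.mpr hn)
    intro x hx hx'
    simp only [Finset.mem_range, not_lt] at hx'
    rw [htri n x (by omega), mul_zero]
  intro i j hij
  rw [ext i (j + 1) (by omega), ext j (j + 1) (by omega), Finset.sum_mul, Finset.mul_sum]
  apply Finset.sum_le_sum
  intro t _
  have h := main j i hij 0 t (Nat.zero_le t)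
  calc a t * R i t * R j 0 = a t * (R i t * R j 0) := by ring
    _ ≤ a t * (R i 0 * R j t) := mul_le_mul_of_nonneg_left h (ha t)
    _ = R i 0 * (a t * R j t) := by ring
end

section
/- Let R = [r_{n,k}] be a consistent Riordan array (Z-sequence equal to the A-sequence) whose A-sequence (a_n) is a nonnegative log-concave sequence. Then for every n, the nth row r_{n,0}, r_{n,1}, …, r_{n,n} of R is log-concave, i.e., r_{n,k}² ≥ r_{n,k-1} r_{n,k+1} for 1 ≤ k ≤ n−1, and moreover all entries r_{n,k} are nonnegative. -/
open Finset

/-- Four point inequality for a nonneg strongly log-concave sequence. -/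
private lemma fourpt_aux (b : ℕ → ℝ)
    (hlc : ∀ i j, i < j → b i * b (j+1) ≤ b (i+1) * b j) :
    ∀ d p r s : ℕ, p ≤ r → p + s = (p + d) + r → b p * b s ≤ b (p + d) * b r := by
  intro d
  induction d with
  | zero =>
    intro p r s hpr hsum
    have hs : s = r := by omega
    subst hs
    simp
  | succ d ih =>
    intro p r s hpr hsum
    rcases eq_or_lt_of_le hpr with h | h
    · subst h
      have hs : s = p + (d+1) := by omega
      subst hs
      rw [mul_comm]
    · have hs : s = r + d + 1 := by omega
      have h1 : b p * b s ≤ b (p+1) * b (s-1) := by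
        have hps : p < s - 1 := by omega
        have := hlc p (s-1) hps
        have hs1 : s - 1 + 1 = s := by omega
        rwa [hs1] at this
      have h2 : b (p+1) * b (s-1) ≤ b ((p+1) + d) * b r :=
        ih (p+1) r (s-1) (by omega) (by omega)
      have he : (p+1) + d = p + (d+1) := by omega
      rw [he] at h2
      exact h1.trans h2

private lemma fourpt (b : ℕ → ℝ)
    (hlc : ∀ i j, i < j → b i * b (j+1) ≤ b (i+1) * b j)
    (p q r s : ℕ) (hpq : p ≤ q) (hpr : p ≤ r) (hsum : p + s = q + r) :
    b p * b s ≤ b q * b r := by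
  obtain ⟨d, rfl⟩ := Nat.exists_eq_add_of_le hpq
  exact fourpt_aux b hlc d p r s hpr hsum

private lemma sum_sum_split (h : ℕ → ℕ → ℝ) (M : ℕ) :
    ∑ x ∈ range M, ∑ y ∈ range M, h x y
      = (∑ y ∈ range M, ∑ x ∈ range y, (h x y + h y x)) + ∑ x ∈ range M, h x x := by
  induction M with
  | zero => simp
  | succ M ih =>
    simp only [sum_range_succ, sum_add_distrib]
    rw [ih]
    simp only [sum_add_distrib]
    ring

private def Bker (b : ℕ → ℝ) (s k : ℕ) : ℝ := if k ≤ s then b (s - k) else 0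

private def A1 (a : ℕ → ℝ) : ℕ → ℝ
  | 0 => 0
  | (k+1) => a k

private def convSeq (a b : ℕ → ℝ) (m : ℕ) : ℝ := ∑ q ∈ Finset.range (m+1), a q * b (m - q)

private lemma sumA0B (a b : ℕ → ℝ) (M s : ℕ) (hs : s < M) :
    ∑ k ∈ range M, a k * Bker b s k = convSeq a b s := by
  rw [convSeq]
  rw [← Finset.sum_subset (Finset.range_subset_range.2 (by omega : s + 1 ≤ M))]
  · apply Finset.sum_congr rfl
    intro k hk
    have hk' : k ≤ s := by simpa [Nat.lt_succ_iff] using hk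
    rw [Bker, if_pos hk']
  · intro k _ hk
    have hk' : ¬ k ≤ s := by
      simp only [mem_range, Nat.lt_succ_iff] at hk
      omega
    rw [Bker, if_neg hk', mul_zero]

private lemma sumA1B (a b : ℕ → ℝ) (M s : ℕ) (hs1 : 1 ≤ s) (hs : s ≤ M) :
    ∑ k ∈ range (M+1), A1 a k * Bker b s k = convSeq a b (s-1) := by
  rw [Finset.sum_range_succ']
  have h0 : A1 a 0 * Bker b s 0 = 0 := by simp [A1]
  rw [h0, add_zero]
  have hcongr : ∀ i ∈ range M, A1 a (i+1) * Bker b s (i+1) = a i * Bker b (s-1) i := by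
    intro i _
    have : Bker b s (i+1) = Bker b (s-1) i := by
      by_cases hi : i + 1 ≤ s
      · rw [Bker, if_pos hi, Bker, if_pos (by omega)]
        congr 1
        omega
      · rw [Bker, if_neg hi, Bker, if_neg (by omega)]
    rw [this, A1]
  rw [Finset.sum_congr rfl hcongr]
  exact sumA0B a b M (s-1) (by omega)

private lemma conv_slc (a b : ℕ → ℝ) (ha : ∀ k, 0 ≤ a k) (hb : ∀ k, 0 ≤ b k)
    (hA : ∀ i j, i < j → a i * a (j+1) ≤ a (i+1) * a j)
    (hB : ∀ i j, i < j → b i * b (j+1) ≤ b (i+1) * b j)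
    (I J : ℕ) (hIJ : I < J) :
    convSeq a b I * convSeq a b (J+1) ≤ convSeq a b (I+1) * convSeq a b J := by
  set N := J + 2 with hN
  have e1 : convSeq a b (I+1) = ∑ k ∈ range N, a k * Bker b (I+1) k :=
    (sumA0B a b N (I+1) (by omega)).symm
  have e2 : convSeq a b J = ∑ k ∈ range N, A1 a k * Bker b (J+1) k := by
    have h := sumA1B a b (J+1) (J+1) (by omega) (le_refl _)
    rw [show J + 1 + 1 = J + 2 by omega, show J + 1 - 1 = J by omega] at h
    rw [hN, h]
  have e3 : convSeq a b (J+1) = ∑ k ∈ range N, a k * Bker b (J+1) k :=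
    (sumA0B a b N (J+1) (by omega)).symm
  have e4 : convSeq a b I = ∑ k ∈ range N, A1 a k * Bker b (I+1) k := by
    have h := sumA1B a b (J+1) (I+1) (by omega) (by omega)
    rw [show J + 1 + 1 = J + 2 by omega, show I + 1 - 1 = I by omega] at h
    rw [hN, h]
  rw [e1, e2, e3, e4]
  rw [← sub_nonneg]
  have expand :
      (∑ k ∈ range N, a k * Bker b (I+1) k) * (∑ k ∈ range N, A1 a k * Bker b (J+1) k)
        - (∑ k ∈ range N, A1 a k * Bker b (I+1) k) * (∑ k ∈ range N, a k * Bker b (J+1) k)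
      = ∑ x ∈ range N, ∑ y ∈ range N,
          (a x * A1 a y * (Bker b (I+1) x * Bker b (J+1) y - Bker b (J+1) x * Bker b (I+1) y)) := by
    have swap : (∑ k ∈ range N, A1 a k * Bker b (I+1) k) * (∑ k ∈ range N, a k * Bker b (J+1) k)
        = ∑ x ∈ range N, ∑ y ∈ range N, (a x * Bker b (J+1) x) * (A1 a y * Bker b (I+1) y) := by
      rw [Finset.sum_mul_sum, Finset.sum_comm]
      exact Finset.sum_congr rfl fun x _ => Finset.sum_congr rfl fun y _ => by ring
    rw [Finset.sum_mul_sum, swap, ← Finset.sum_sub_distrib]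
    apply Finset.sum_congr rfl
    intro x _
    rw [← Finset.sum_sub_distrib]
    apply Finset.sum_congr rfl
    intro y _
    ring
  rw [expand, sum_sum_split]
  have diag : ∑ x ∈ range N,
      (a x * A1 a x * (Bker b (I+1) x * Bker b (J+1) x - Bker b (J+1) x * Bker b (I+1) x)) = 0 := by
    apply Finset.sum_eq_zero
    intro x _
    ring
  rw [diag, add_zero]
  apply Finset.sum_nonneg
  intro y _
  apply Finset.sum_nonneg
  intro x hx
  have hxy : x < y := mem_range.mp hx
  have hterm :
      a x * A1 a y * (Bker b (I+1) x * Bker b (J+1) y - Bker b (J+1) x * Bker b (I+1) y)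
        + a y * A1 a x * (Bker b (I+1) y * Bker b (J+1) x - Bker b (J+1) y * Bker b (I+1) x)
      = (a x * A1 a y - a y * A1 a x)
          * (Bker b (I+1) x * Bker b (J+1) y - Bker b (J+1) x * Bker b (I+1) y) := by
    ring
  rw [hterm]
  apply mul_nonneg
  · -- a-minor nonneg
    obtain ⟨y', rfl⟩ : ∃ y', y = y' + 1 := ⟨y - 1, by omega⟩
    match x with
    | 0 =>
      simp only [A1]
      have : a 0 * a y' - a (y'+1) * 0 = a 0 * a y' := by ring
      rw [this]
      exact mul_nonneg (ha 0) (ha y')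
    | (x'+1) =>
      simp only [A1]
      rw [sub_nonneg]
      have hx'y' : x' < y' := by omega
      calc a (y'+1) * a x' = a x' * a (y'+1) := by ring
        _ ≤ a (x'+1) * a y' := hA x' y' hx'y'
  · -- B-minor nonneg
    have hBval : ∀ s k, k ≤ s → Bker b s k = b (s - k) := fun s k h => if_pos h
    have hBzero : ∀ s k, s < k → Bker b s k = 0 := fun s k h => if_neg (by omega)
    have hBnn : ∀ s k, 0 ≤ Bker b s k := by
      intro s k
      rw [Bker]
      split
      · exact hb _
      · exact le_refl 0
    rw [sub_nonneg]
    by_cases hyI : y ≤ I + 1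
    · rw [hBval (J+1) x (by omega), hBval (I+1) y hyI, hBval (I+1) x (by omega),
        hBval (J+1) y (by omega)]
      rw [mul_comm]
      exact fourpt b hB (I+1-y) (I+1-x) (J+1-y) (J+1-x) (by omega) (by omega) (by omega)
    · by_cases hxI : x ≤ I + 1
      · rw [hBzero (I+1) y (by omega), mul_zero]
        exact mul_nonneg (hBnn _ _) (hBnn _ _)
      · rw [hBzero (I+1) x (by omega), hBzero (I+1) y (by omega)]
        simp

private def revSeq (t : ℕ → ℝ) (n : ℕ) (r : ℕ) : ℝ := if r ≤ n then t (n - r) else 0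

private lemma corr_slc (a t : ℕ → ℝ) (n : ℕ) (ha : ∀ k, 0 ≤ a k) (ht : ∀ k, 0 ≤ t k)
    (hA : ∀ i j, i < j → a i * a (j+1) ≤ a (i+1) * a j)
    (hT : ∀ i j, i < j → t i * t (j+1) ≤ t (i+1) * t j)
    (htri : ∀ m, n < m → t m = 0) (i j : ℕ) (hij : i < j) :
    (∑ p ∈ range (n+1), a p * t (i + p)) * (∑ p ∈ range (n+1), a p * t (j + 1 + p))
      ≤ (∑ p ∈ range (n+1), a p * t (i + 1 + p)) * (∑ p ∈ range (n+1), a p * t (j + p)) := by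
  have hnn : ∀ m : ℕ, 0 ≤ ∑ p ∈ range (n+1), a p * t (m + p) :=
    fun m => Finset.sum_nonneg fun p _ => mul_nonneg (ha p) (ht _)
  by_cases hjn : j + 1 ≤ n
  · set b : ℕ → ℝ := revSeq t n with hbdef
    have hbval : ∀ r, r ≤ n → b r = t (n - r) := fun r h => if_pos h
    have hbzero : ∀ r, n < r → b r = 0 := fun r h => if_neg (by omega)
    have hb : ∀ k, 0 ≤ b k := by
      intro k
      rw [hbdef, revSeq]
      split
      · exact ht _
      · exact le_refl 0
    have hBslc : ∀ i' j', i' < j' → b i' * b (j'+1) ≤ b (i'+1) * b j' := by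
      intro i' j' h
      by_cases hj' : j' + 1 ≤ n
      · rw [hbval i' (by omega), hbval (j'+1) hj', hbval (i'+1) (by omega), hbval j' (by omega)]
        have hlt : n - (j'+1) < n - (i'+1) := by omega
        have h2 := hT (n - (j'+1)) (n - (i'+1)) hlt
        rw [show n - (i'+1) + 1 = n - i' by omega, show n - (j'+1) + 1 = n - j' by omega] at h2
        calc t (n-i') * t (n-(j'+1)) = t (n - (j'+1)) * t (n - i') := by ring
          _ ≤ t (n - j') * t (n - (i'+1)) := h2
          _ = t (n - (i'+1)) * t (n - j') := by ring
      · rw [hbzero (j'+1) (by omega), mul_zero]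
        exact mul_nonneg (hb _) (hb _)
    have hcu : ∀ k, k ≤ n → (∑ p ∈ range (n+1), a p * t (k + p)) = convSeq a b (n - k) := by
      intro k hk
      rw [convSeq]
      rw [← Finset.sum_subset (Finset.range_subset_range.2 (by omega : n - k + 1 ≤ n + 1))]
      · apply Finset.sum_congr rfl
        intro q hq
        have hq' : q ≤ n - k := by simpa [Nat.lt_succ_iff] using hq
        congr 1
        rw [hbval (n - k - q) (by omega), show n - (n - k - q) = k + q by omega]
      · intro p hp1 hp2
        have hnk : n < k + p := by
          simp only [mem_range, Nat.lt_succ_iff] at hp1 hp2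
          omega
        rw [htri _ hnk, mul_zero]
    rw [hcu i (by omega), hcu (j+1) hjn, hcu (i+1) (by omega), hcu j (by omega)]
    have h3 := conv_slc a b ha hb hA hBslc (n - (j+1)) (n - (i+1)) (by omega)
    rw [show n - (j+1) + 1 = n - j by omega, show n - (i+1) + 1 = n - i by omega] at h3
    calc convSeq a b (n-i) * convSeq a b (n-(j+1))
        = convSeq a b (n-(j+1)) * convSeq a b (n-i) := by ring
      _ ≤ convSeq a b (n-j) * convSeq a b (n-(i+1)) := h3
      _ = convSeq a b (n-(i+1)) * convSeq a b (n-j) := by ring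
  · have hz : (∑ p ∈ range (n+1), a p * t (j + 1 + p)) = 0 := by
      apply Finset.sum_eq_zero
      intro p _
      rw [htri _ (by omega), mul_zero]
    rw [hz, mul_zero]
    exact mul_nonneg (hnn _) (hnn _)

theorem consistent_riordan_rows_logConcave (a z : ℕ → ℝ) (ha : ∀ n, 0 ≤ a n) (hz : ∀ n, 0 ≤ z n)
    (hcons : ∀ n, z n = a n)
    (hlogconcave : ∀ i j : ℕ, i < j → a i * a (j + 1) ≤ a (i + 1) * a j)
    (R : ℕ → ℕ → ℝ)
    (hR00 : R 0 0 = 1)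
    (htri : ∀ n k, n < k → R n k = 0)
    (hZ : ∀ n, R (n + 1) 0 = ∑ j ∈ Finset.range (n + 1), z j * R n j)
    (hA : ∀ n k, R (n + 1) (k + 1) = ∑ j ∈ Finset.range (n + 1), a j * R n (k + j)) :
    (∀ n k : ℕ, 0 ≤ R n k) ∧
      ∀ n k : ℕ, 1 ≤ k → k + 1 ≤ n → R n (k - 1) * R n (k + 1) ≤ R n k ^ 2 := by
  have key : ∀ n, (∀ k, 0 ≤ R n k) ∧ (∀ k, R n (k+1) ≤ R n k) ∧
      (∀ i j, i < j → R n i * R n (j+1) ≤ R n (i+1) * R n j) := by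
    intro n
    induction n with
    | zero =>
      have h0 : ∀ k, 0 < k → R 0 k = 0 := fun k hk => htri 0 k hk
      have hnn : ∀ k, 0 ≤ R 0 k := by
        intro k
        rcases Nat.eq_zero_or_pos k with h | h
        · subst h; rw [hR00]; norm_num
        · rw [h0 k h]
      refine ⟨hnn, ?_, ?_⟩
      · intro k
        rw [h0 (k+1) (by omega)]
        exact hnn k
      · intro i j hij
        rw [h0 (j+1) (by omega), mul_zero]
        exact mul_nonneg (hnn _) (hnn _)
    | succ n ih =>
      obtain ⟨hnn, hmono, hslc⟩ := ih
      have hu : ∀ k, R (n+1) (k+1) = ∑ p ∈ Finset.range (n+1), a p * R n (k+p) :=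
        fun k => hA n k
      have hu0 : R (n+1) 0 = R (n+1) 1 := by
        have h1 := hA n 0
        norm_num at h1
        rw [hZ n, h1]
        exact Finset.sum_congr rfl fun p _ => by rw [hcons]
      have hnn' : ∀ k, 0 ≤ R (n+1) k := by
        have hs : ∀ k, 0 ≤ ∑ p ∈ Finset.range (n+1), a p * R n (k+p) :=
          fun k => Finset.sum_nonneg fun p _ => mul_nonneg (ha p) (hnn _)
        intro k
        cases k with
        | zero => rw [hu0, hu 0]; exact hs 0
        | succ m => rw [hu m]; exact hs m
      have humono : ∀ k, (∑ p ∈ Finset.range (n+1), a p * R n (k+1+p))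
          ≤ ∑ p ∈ Finset.range (n+1), a p * R n (k+p) := by
        intro k
        apply Finset.sum_le_sum
        intro p _
        apply mul_le_mul_of_nonneg_left _ (ha p)
        rw [show k+1+p = k+p+1 by omega]
        exact hmono (k+p)
      have hmono' : ∀ k, R (n+1) (k+1) ≤ R (n+1) k := by
        intro k
        cases k with
        | zero => rw [hu0]
        | succ m =>
          rw [hu (m+1), hu m]
          exact humono m
      refine ⟨hnn', hmono', ?_⟩
      intro i j hij
      obtain ⟨j', rfl⟩ : ∃ j', j = j'+1 := ⟨j-1, by omega⟩
      cases i with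
      | zero =>
        simp only [zero_add]
        rw [hu0]
        exact mul_le_mul_of_nonneg_left (hmono' (j'+1)) (hnn' 1)
      | succ i' =>
        have hi'j' : i' < j' := by omega
        rw [hu i', hu (j'+1), hu (i'+1), hu j']
        exact corr_slc a (R n) n ha hnn hlogconcave hslc (fun m hm => htri n m hm) i' j' hi'j'
  constructor
  · intro n k
    exact (key n).1 k
  · intro n k hk _
    have h := (key n).2.2 (k-1) k (by omega)
    rw [show k - 1 + 1 = k by omega] at h
    calc R n (k-1) * R n (k+1) ≤ R n k * R n k := h
      _ = R n k ^ 2 := (pow_two _).symm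
end
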